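/- arXiv:2104.14263 — 7 statements merged into one kernel-verified Lean document; each statement's English description precedes it below -/
import Mathlib

section
/- Let P be a poset, W a Stone space with Boolean ring R of compact open subsets, and {X_p | p ∈ P} a semi-trim P-partition of W. Let A ∈ R be nonempty and let F be the set of minimal elements of T(A). Then F is finite and there is a finite partition {B_p | p ∈ F} of A into sets of R such that B_p is p-trim for each p ∈ F. -/
open Set

variable {P W : Type*} [PartialOrder P] [TopologicalSpace W]

/-- The type of a subset `Y` with respect to the family `X`. -/
def ptype (X : P → Set W) (Y : Set W) : Set P :=
  {p | (Y ∩ X p).Nonempty}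

/-- `A` is a `p`-trim set: a compact open set whose type is exactly `{q | p ≤ q}`. -/
def IsTrimSet (X : P → Set W) (p : P) (A : Set W) : Prop :=
  IsCompact A ∧ IsOpen A ∧ ptype X A = Ici p

/-- `P̂`: the set of labels `p` for which a `p`-trim set exists. -/
def trimHat (X : P → Set W) : Set P :=
  {p | ∃ A, IsTrimSet X p A}

/-- A `P`-partition: a pairwise disjoint family of nonempty subsets. -/
structure IsPPartition (X : P → Set W) : Prop where
  nonempty : ∀ p, (X p).Nonempty
  pairwise_disjoint : Pairwise fun p q => Disjoint (X p) (X q)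

/-- A semi-trim `P`-partition. -/
structure IsSemiTrim (X : P → Set W) extends IsPPartition X : Prop where
  nhds_base : ∀ w : W, ∀ U ∈ nhds w, ∃ p A, IsTrimSet X p A ∧ w ∈ A ∧ A ⊆ U
  trim_dense : ∀ A : Set W, IsOpen A → ∀ p ∈ ptype X A ∩ trimHat X,
    ∃ B ⊆ A, IsTrimSet X p B
  label_sup : ∀ p, ∀ x ∈ X p, IsLUB {q | ∃ A, IsTrimSet X q A ∧ x ∈ A} p
  full : ∀ p : P, ∀ w : W,
    (∀ U ∈ nhds w, ∃ A, IsTrimSet X p A ∧ w ∈ A ∧ A ⊆ U) → w ∈ X p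

lemma ptype_mono (X : P → Set W) {Y Z : Set W} (h : Y ⊆ Z) : ptype X Y ⊆ ptype X Z :=
  fun _ ⟨w, hw1, hw2⟩ => ⟨w, h hw1, hw2⟩

lemma ptype_union (X : P → Set W) (Y Z : Set W) :
    ptype X (Y ∪ Z) = ptype X Y ∪ ptype X Z := by
  ext p
  simp only [ptype, mem_setOf_eq, union_inter_distrib_right, union_nonempty, mem_union]

/-- Inductive construction of pairwise disjoint trim subsets of `A`, one for each element of
an antichain `G`. -/
lemma exists_disjoint_trim [T2Space W] (X : P → Set W) (h : IsSemiTrim X)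
    (A : Set W) (hAo : IsOpen A) :
    ∀ G : Finset P, (∀ q ∈ G, q ∈ ptype X A) → (∀ q ∈ G, q ∈ trimHat X) →
    (∀ q ∈ G, ∀ r ∈ G, r ≤ q → r = q) →
    ∃ B : P → Set W, (∀ q ∈ G, IsTrimSet X q (B q) ∧ B q ⊆ A) ∧
      (∀ q ∈ G, ∀ r ∈ G, q ≠ r → Disjoint (B q) (B r)) := by
  classical
  intro G
  induction G using Finset.induction with
  | empty => exact fun _ _ _ => ⟨fun _ => ∅, by simp, by simp⟩
  | @insert q G hqG ih =>
    intro hG1 hG2 hG3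
    obtain ⟨B, hB1, hB2⟩ := ih (fun r hr => hG1 r (Finset.mem_insert_of_mem hr))
      (fun r hr => hG2 r (Finset.mem_insert_of_mem hr))
      (fun r hr s hs => hG3 r (Finset.mem_insert_of_mem hr) s (Finset.mem_insert_of_mem hs))
    set U : Set W := A \ ⋃ r ∈ G, B r with hU
    have hUo : IsOpen U := hAo.sdiff <| G.finite_toSet.isClosed_biUnion
      fun r hr => ((hB1 r hr).1.1).isClosed
    have hqU : q ∈ ptype X U := by
      obtain ⟨w, hwA, hwX⟩ := hG1 q (Finset.mem_insert_self q G)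
      refine ⟨w, ⟨hwA, ?_⟩, hwX⟩
      simp only [mem_iUnion, not_exists]
      intro r hr hw
      have : q ∈ ptype X (B r) := ⟨w, hw, hwX⟩
      rw [(hB1 r hr).1.2.2] at this
      exact hqG (hG3 q (Finset.mem_insert_self q G) r (Finset.mem_insert_of_mem hr) this ▸ hr)
    obtain ⟨C, hCU, hCtrim⟩ := h.trim_dense U hUo q
      ⟨hqU, hG2 q (Finset.mem_insert_self q G)⟩
    refine ⟨Function.update B q C, ?_, ?_⟩
    · intro r hr
      rcases Finset.mem_insert.1 hr with rfl | hr
      · rw [Function.update_self]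
        exact ⟨hCtrim, hCU.trans (diff_subset)⟩
      · have hrq : r ≠ q := fun h' => hqG (h' ▸ hr)
        rw [Function.update_of_ne hrq]
        exact hB1 r hr
    · have hCB : ∀ r ∈ G, Disjoint C (B r) := by
        intro r hr
        rw [Set.disjoint_left]
        intro w hwC hwB
        exact (hCU hwC).2 (mem_biUnion hr hwB)
      intro r hr' s hs' hrs
      rcases Finset.mem_insert.1 hr' with hrq | hr2
      · subst hrq
        rcases Finset.mem_insert.1 hs' with hsq | hs2
        · exact absurd hsq.symm hrs
        · have hsq : s ≠ r := fun h' => hqG (h' ▸ hs2)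
          rw [Function.update_self, Function.update_of_ne hsq]
          exact hCB s hs2
      · rcases Finset.mem_insert.1 hs' with hsq | hs2
        · subst hsq
          have hrq : r ≠ s := fun h' => hqG (h' ▸ hr2)
          rw [Function.update_self, Function.update_of_ne hrq]
          exact (hCB r hr2).symm
        · have hrq : r ≠ q := fun h' => hqG (h' ▸ hr2)
          have hsq2 : s ≠ q := fun h' => hqG (h' ▸ hs2)
          rw [Function.update_of_ne hrq, Function.update_of_ne hsq2]
          exact hB2 r hr2 s hs2 hrs

/-- In a Stone space `W` with a semi-trim `P`-partition, for every nonempty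
compact open `A` the set `F` of minimal elements of `T(A)` is finite, and `A` has a finite
partition into compact open sets, one `p`-trim piece for each `p ∈ F`. -/
theorem finite_trim_partition_of_compactOpen
    [LocallyCompactSpace W] [TotallyDisconnectedSpace W] [T2Space W]
    (X : P → Set W) (h : IsSemiTrim X)
    (A : Set W) (hAc : IsCompact A) (hAo : IsOpen A) (hne : A.Nonempty) :
    {p ∈ ptype X A | ∀ q ∈ ptype X A, ¬ q < p}.Finite ∧
    ∃ B : P → Set W,
      (∀ p ∈ {p ∈ ptype X A | ∀ q ∈ ptype X A, ¬ q < p}, IsTrimSet X p (B p)) ∧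
      (∀ p ∈ {p ∈ ptype X A | ∀ q ∈ ptype X A, ¬ q < p},
        ∀ q ∈ {p ∈ ptype X A | ∀ q ∈ ptype X A, ¬ q < p}, p ≠ q → Disjoint (B p) (B q)) ∧
      (⋃ p ∈ {p ∈ ptype X A | ∀ q ∈ ptype X A, ¬ q < p}, B p) = A := by
  classical
  set F := {p ∈ ptype X A | ∀ q ∈ ptype X A, ¬ q < p} with hFdef
  -- a cover of A by trim subsets of A
  have hcov : ∀ x : A, ∃ p U, IsTrimSet X p U ∧ ↑x ∈ U ∧ U ⊆ A :=
    fun x => h.nhds_base x A (hAo.mem_nhds x.2)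
  choose pf Uf hUt hUm hUs using hcov
  obtain ⟨t, ht⟩ := hAc.elim_finite_subcover Uf (fun x => (hUt x).2.1)
    (fun w hw => mem_iUnion.2 ⟨⟨w, hw⟩, hUm ⟨w, hw⟩⟩)
  -- description of the type of A
  have hTA : ∀ q, q ∈ ptype X A ↔ ∃ x ∈ t, pf x ≤ q := by
    intro q
    constructor
    · rintro ⟨w, hwA, hwX⟩
      obtain ⟨x, hxt, hwU⟩ := mem_iUnion₂.1 (ht hwA)
      have hq : q ∈ ptype X (Uf x) := ⟨w, hwU, hwX⟩
      rw [(hUt x).2.2] at hq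
      exact ⟨x, hxt, hq⟩
    · rintro ⟨x, hxt, hle⟩
      have hq : q ∈ ptype X (Uf x) := by rw [(hUt x).2.2]; exact hle
      obtain ⟨w, hwU, hwX⟩ := hq
      exact ⟨w, hUs x hwU, hwX⟩
  have hFmem : ∀ q ∈ F, ∃ x ∈ t, pf x = q := by
    rintro q ⟨hqT, hqmin⟩
    obtain ⟨x, hxt, hle⟩ := (hTA q).1 hqT
    rcases hle.lt_or_eq with hlt | heq
    · exact absurd hlt (hqmin (pf x) ((hTA (pf x)).2 ⟨x, hxt, le_rfl⟩))
    · exact ⟨x, hxt, heq⟩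
  -- F is finite
  have hFfin : F.Finite := by
    refine Set.Finite.subset (t.image pf).finite_toSet ?_
    intro q hq
    obtain ⟨x, hxt, hx⟩ := hFmem q hq
    exact Finset.mem_coe.2 (Finset.mem_image.2 ⟨x, hxt, hx⟩)
  refine ⟨hFfin, ?_⟩
  have hFhat : ∀ q ∈ F, q ∈ trimHat X := by
    intro q hq
    obtain ⟨x, hxt, hx⟩ := hFmem q hq
    exact ⟨Uf x, hx ▸ hUt x⟩
  have hFanti : ∀ q ∈ F, ∀ r ∈ F, r ≤ q → r = q := by
    rintro q ⟨hqT, hqmin⟩ r ⟨hrT, _⟩ hle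
    rcases hle.lt_or_eq with hlt | heq
    · exact absurd hlt (hqmin r hrT)
    · exact heq
  -- below every label of the cover there is an element of F
  have hbelow : ∀ x : A, x ∈ t → ∃ q, q ∈ F ∧ q ≤ pf x := by
    intro x hxt
    set s := (t.image pf).filter (· ≤ pf x) with hs
    have hsne : s.Nonempty :=
      ⟨pf x, Finset.mem_filter.2 ⟨Finset.mem_image.2 ⟨x, hxt, rfl⟩, le_rfl⟩⟩
    obtain ⟨m0, hm0s, hm0min⟩ := s.exists_minimal hsne
    obtain ⟨hm0i, hm0le⟩ := Finset.mem_filter.1 hm0s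
    obtain ⟨y, hyt, hy⟩ := Finset.mem_image.1 hm0i
    refine ⟨m0, ⟨(hTA m0).2 ⟨y, hyt, hy.le⟩, ?_⟩, hm0le⟩
    intro r hrT hlt
    obtain ⟨z, hzt, hz⟩ := (hTA r).1 hrT
    have hzs : pf z ∈ s := Finset.mem_filter.2
      ⟨Finset.mem_image.2 ⟨z, hzt, rfl⟩, ((hz.trans hlt.le).trans hm0le)⟩
    exact (lt_of_le_of_lt hz hlt).not_ge (hm0min hzs (lt_of_le_of_lt hz hlt).le)
  have hbelow' : ∀ x : A, ∃ q, x ∈ t → q ∈ F ∧ q ≤ pf x := by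
    intro x
    by_cases hxt : x ∈ t
    · obtain ⟨q, hq⟩ := hbelow x hxt
      exact ⟨q, fun _ => hq⟩
    · exact ⟨pf x, fun hc => absurd hc hxt⟩
  choose m hm using hbelow'
  -- the finset version of F
  set G := hFfin.toFinset with hG
  have hGF : ∀ q, q ∈ G ↔ q ∈ F := fun q => hFfin.mem_toFinset
  -- pairwise disjoint trim subsets of A, one per element of F
  obtain ⟨B0, hB01, hB02⟩ := exists_disjoint_trim X h A hAo G
    (fun q hq => ((hGF q).1 hq).1)
    (fun q hq => hFhat q ((hGF q).1 hq))
    (fun q hq r hr => hFanti q ((hGF q).1 hq) r ((hGF r).1 hr))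
  -- the remainder
  set Rset := A \ ⋃ q ∈ G, B0 q with hRset
  have hRo : IsOpen Rset :=
    hAo.sdiff (G.finite_toSet.isClosed_biUnion fun q hq => ((hB01 q hq).1.1).isClosed)
  have hRc : IsCompact Rset := by
    rw [hRset, diff_eq]
    exact hAc.inter_right (isOpen_biUnion fun q hq => (hB01 q hq).1.2.1).isClosed_compl
  have hRsubA : Rset ⊆ A := diff_subset
  -- grouping the cover by assigned minimal labels
  set V : P → Set W := fun q => ⋃ x ∈ t.filter (fun x => m x = q), Uf x with hV
  have hVc : ∀ q, IsCompact (V q) :=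
    fun q => (t.filter (fun x => m x = q)).isCompact_biUnion fun x _ => (hUt x).1
  have hVo : ∀ q, IsOpen (V q) := fun q => isOpen_biUnion fun x _ => (hUt x).2.1
  have hVT : ∀ q, ptype X (V q) ⊆ Ici q := by
    rintro q r ⟨w, hwV, hwX⟩
    obtain ⟨x, hx, hwU⟩ := mem_iUnion₂.1 hwV
    obtain ⟨hxt, hxm⟩ := Finset.mem_filter.1 hx
    have hr : r ∈ ptype X (Uf x) := ⟨w, hwU, hwX⟩
    rw [(hUt x).2.2] at hr
    exact le_trans (hxm ▸ (hm x hxt).2) hr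
  -- an enumeration of G
  set e : P → ℕ := fun p => List.idxOf p G.toList with he
  have heInj : ∀ q ∈ G, ∀ r ∈ G, e q = e r → q = r := fun q hq r hr hqr =>
    (List.idxOf_inj (Finset.mem_toList.2 hq)).1 hqr
  -- the disjointified remainder pieces
  set Rp : P → Set W := fun q =>
    (Rset ∩ V q) \ ⋃ r ∈ G.filter (fun r => e r < e q), V r with hRp
  have hRpV : ∀ q, Rp q ⊆ Rset ∩ V q := fun q => diff_subset
  -- the final partition
  refine ⟨fun q => B0 q ∪ Rp q, ?_, ?_, ?_⟩
  · -- trimness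
    intro q hq
    have hqG : q ∈ G := (hGF q).2 hq
    refine ⟨?_, ?_, ?_⟩
    · exact ((hB01 q hqG).1.1).union
        (((hRc.inter_right (hVc q).isClosed)).diff
          (isOpen_biUnion fun r _ => hVo r))
    · exact ((hB01 q hqG).1.2.1).union
        ((hRo.inter (hVo q)).sdiff
          ((G.filter (fun r => e r < e q)).finite_toSet.isClosed_biUnion
            fun r _ => (hVc r).isClosed))
    · apply subset_antisymm
      · rw [ptype_union]
        refine union_subset ?_ ?_
        · exact le_of_eq (hB01 q hqG).1.2.2
        · exact (ptype_mono X (fun w hw => (hRpV q hw).2)).trans (hVT q)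
      · exact (hB01 q hqG).1.2.2 ▸ ptype_mono X subset_union_left
  · -- disjointness
    have hRpRp : ∀ a ∈ G, ∀ b ∈ G, e a < e b → Disjoint (Rp a) (Rp b) := by
      intro a ha b hb hab
      rw [Set.disjoint_left]
      intro w hwa hwb
      exact hwb.2 (mem_biUnion (Finset.mem_filter.2 ⟨ha, hab⟩) (hRpV a hwa).2)
    have hB0Rp : ∀ a ∈ G, ∀ b, Disjoint (B0 a) (Rp b) := by
      intro a ha b
      rw [Set.disjoint_left]
      intro w hwa hwb
      exact ((hRpV b hwb).1).2 (mem_biUnion ha hwa)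
    intro q hq r hr hqr
    have hqG : q ∈ G := (hGF q).2 hq
    have hrG : r ∈ G := (hGF r).2 hr
    rw [Set.disjoint_union_left, Set.disjoint_union_right, Set.disjoint_union_right]
    refine ⟨⟨hB02 q hqG r hrG hqr, hB0Rp q hqG r⟩, ⟨(hB0Rp r hrG q).symm, ?_⟩⟩
    rcases lt_trichotomy (e q) (e r) with hlt | heq | hgt
    · exact hRpRp q hqG r hrG hlt
    · exact absurd (heInj q hqG r hrG heq) hqr
    · exact (hRpRp r hrG q hqG hgt).symm
  · -- the union is A
    apply subset_antisymm
    · refine iUnion₂_subset fun q hq => union_subset ((hB01 q ((hGF q).2 hq)).2) ?_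
      exact fun w hw => hRsubA (hRpV q hw).1
    · intro w hw
      by_cases hwB : w ∈ ⋃ q ∈ G, B0 q
      · obtain ⟨q, hqG, hwq⟩ := mem_iUnion₂.1 hwB
        exact mem_iUnion₂.2 ⟨q, (hGF q).1 hqG, mem_union_left _ hwq⟩
      · have hwR : w ∈ Rset := ⟨hw, hwB⟩
        obtain ⟨x, hxt, hwU⟩ := mem_iUnion₂.1 (ht hw)
        have hwV : w ∈ V (m x) := mem_biUnion (Finset.mem_filter.2 ⟨hxt, rfl⟩) hwU
        set S := G.filter (fun r => w ∈ V r) with hS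
        have hSne : S.Nonempty :=
          ⟨m x, Finset.mem_filter.2 ⟨(hGF (m x)).2 (hm x hxt).1, hwV⟩⟩
        obtain ⟨q0, hq0S, hq0min⟩ := S.exists_min_image e hSne
        obtain ⟨hq0G, hwV0⟩ := Finset.mem_filter.1 hq0S
        have hwRp : w ∈ Rp q0 := by
          refine ⟨⟨hwR, hwV0⟩, ?_⟩
          intro hmem
          obtain ⟨r, hrf, hwVr⟩ := mem_iUnion₂.1 hmem
          obtain ⟨hrG, hre⟩ := Finset.mem_filter.1 hrf
          exact absurd (hq0min r (Finset.mem_filter.2 ⟨hrG, hwVr⟩)) (not_le.2 hre)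
        exact mem_iUnion₂.2 ⟨q0, (hGF q0).1 hq0G, mem_union_right _ hwRp⟩
end

section
/- Let P be a poset. If some Stone space W admits a complete trim P-partition, then P satisfies the ascending chain condition. -/
open Set

variable {P W : Type*} [PartialOrder P] [TopologicalSpace W]

/-- If some Stone space admits a complete trim `P`-partition, then `P`
satisfies the ascending chain condition. -/
theorem acc_of_completeTrim
    (h : ∃ (W : Type) (_ : TopologicalSpace W),
      LocallyCompactSpace W ∧ TotallyDisconnectedSpace W ∧ T2Space W ∧
      ∃ X : P → Set W, IsPPartition X ∧ (⋃ p, X p) = univ ∧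
        (∀ w : W, ∀ U ∈ nhds w, ∃ p A, IsTrimSet X p A ∧ w ∈ A ∧ A ⊆ U) ∧
        (∀ p, ∀ x ∈ X p, ∃ A, IsTrimSet X p A ∧ x ∈ A) ∧
        (∀ p : P, ∀ w : W,
          (∀ U ∈ nhds w, ∃ A, IsTrimSet X p A ∧ w ∈ A ∧ A ⊆ U) → w ∈ X p)) :
    ∀ f : ℕ → P, ¬ StrictMono f := by
  rintro f hf
  obtain ⟨W, tW, -, -, hT2, X, hPart, hcover, hbase, hpoint, -⟩ := h
  -- membership in ptype
  have hmem : ∀ (A : Set W) (q : P), q ∈ ptype X A ↔ (A ∩ X q).Nonempty := fun A q => Iff.rfl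
  have hptype_mono : ∀ {A B : Set W}, A ⊆ B → ptype X A ⊆ ptype X B := by
    intro A B hAB q hq
    obtain ⟨x, hx1, hx2⟩ := hq
    exact ⟨x, hAB hx1, hx2⟩
  -- Step: inside any `f n`-trim set there is an `f (n+1)`-trim set.
  have step : ∀ n (A : Set W), IsTrimSet X (f n) A →
      ∃ B, IsTrimSet X (f (n+1)) B ∧ B ⊆ A := by
    intro n A hA
    have hle : f (n+1) ∈ ptype X A := by
      rw [hA.2.2]; exact (hf (Nat.lt_succ_self n)).le
    obtain ⟨x, hxA, hxX⟩ := hle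
    obtain ⟨D, hD, hxD⟩ := hpoint _ x hxX
    have hADnhds : A ∩ D ∈ nhds x :=
      (hA.2.1.inter hD.2.1).mem_nhds ⟨hxA, hxD⟩
    obtain ⟨q, C, hC, hxC, hCsub⟩ := hbase x (A ∩ D) hADnhds
    have hq1 : q ≤ f (n+1) := by
      have : f (n+1) ∈ ptype X C := ⟨x, hxC, hxX⟩
      rwa [hC.2.2] at this
    have hq2 : f (n+1) ≤ q := by
      have hqC : q ∈ ptype X C := by rw [hC.2.2]; exact le_refl q
      have : q ∈ ptype X D := hptype_mono (hCsub.trans inter_subset_right) hqC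
      rwa [hD.2.2] at this
    have hq : q = f (n+1) := le_antisymm hq1 hq2
    exact ⟨C, hq ▸ hC, hCsub.trans inter_subset_left⟩
  choose stepB hstepB hstepsub using step
  -- initial trim set
  obtain ⟨x0, hx0⟩ := hPart.nonempty (f 0)
  obtain ⟨A0, hA0, -⟩ := hpoint (f 0) x0 hx0
  -- nested sequence of trim sets
  let A : (n : ℕ) → {S : Set W // IsTrimSet X (f n) S} :=
    Nat.rec ⟨A0, hA0⟩ fun n p => ⟨stepB n p.1 p.2, hstepB n p.1 p.2⟩
  have hA : ∀ n, IsTrimSet X (f n) (A n).1 := fun n => (A n).2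
  have hnest : ∀ n, (A (n+1)).1 ⊆ (A n).1 := fun n => hstepsub n (A n).1 (A n).2
  have hAne : ∀ n, ((A n).1).Nonempty := by
    intro n
    have : f n ∈ ptype X (A n).1 := by rw [(hA n).2.2]; exact le_refl _
    obtain ⟨x, hx, -⟩ := this
    exact ⟨x, hx⟩
  have hAcl : ∀ n, IsClosed (A n).1 := fun n => (hA n).1.isClosed
  -- the intersection K
  set K : Set W := ⋂ n, (A n).1 with hK
  have hKne : K.Nonempty :=
    IsCompact.nonempty_iInter_of_sequence_nonempty_isCompact_isClosed _
      hnest hAne (hA 0).1 hAcl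
  have hKcomp : IsCompact K :=
    (hA 0).1.of_isClosed_subset (isClosed_iInter hAcl) (iInter_subset _ 0)
  -- each point of W has a label
  have hlabel : ∀ w : W, ∃ r, w ∈ X r := by
    intro w
    have : w ∈ ⋃ p, X p := hcover ▸ mem_univ w
    exact mem_iUnion.mp this
  choose r hr using hlabel
  choose C hCtrim hCmem using fun w => hpoint (r w) w (hr w)
  -- labels of points of K dominate all f n
  have hrbig : ∀ w ∈ K, ∀ n, f n ≤ r w := by
    intro w hw n
    have : r w ∈ ptype X (A n).1 := ⟨w, mem_iInter.mp hw n, hr w⟩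
    rwa [(hA n).2.2] at this
  -- finite subcover of K by the trim sets C w
  obtain ⟨t, ht⟩ := hKcomp.elim_finite_subcover (fun i : K => C i.1)
    (fun i => (hCtrim i.1).2.1) (fun w hw => mem_iUnion.mpr ⟨⟨w, hw⟩, hCmem w⟩)
  set U : Set W := ⋃ i ∈ t, C i.1 with hU
  have hUopen : IsOpen U := isOpen_biUnion fun i _ => (hCtrim i.1).2.1
  -- some A N is contained in U
  have hex : ∃ N, (A N).1 ⊆ U := by
    by_contra hcon
    push_neg at hcon
    have hne' : ∀ n, ((A n).1 \ U).Nonempty := by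
      intro n
      obtain ⟨x, hx, hxU⟩ := not_subset.mp (fun hsub => (hcon n) hsub)
      exact ⟨x, hx, hxU⟩
    have := IsCompact.nonempty_iInter_of_sequence_nonempty_isCompact_isClosed
      (fun n => (A n).1 \ U) (fun n => diff_subset_diff_left (hnest n)) hne'
      ((hA 0).1.diff hUopen) (fun n => (hAcl n).sdiff hUopen)
    obtain ⟨w, hw⟩ := this
    have hwK : w ∈ K := mem_iInter.mpr fun n => (mem_iInter.mp hw n).1
    exact (mem_iInter.mp hw 0).2 (ht hwK)
  obtain ⟨N, hN⟩ := hex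
  -- pick a point of X (f N) inside A N
  have : f N ∈ ptype X (A N).1 := by rw [(hA N).2.2]; exact le_refl _
  obtain ⟨y, hyA, hyX⟩ := this
  obtain ⟨i, hit, hyC⟩ := mem_iUnion₂.mp (hN hyA)
  have h1 : r i.1 ≤ f N := by
    have : f N ∈ ptype X (C i.1) := ⟨y, hyC, hyX⟩
    rwa [(hCtrim i.1).2.2] at this
  have h2 : f (N+1) ≤ r i.1 := hrbig i.1 i.2 (N+1)
  exact absurd ((hf (Nat.lt_succ_self N)).trans_le (h2.trans h1)) (lt_irrefl _)
end

section
/- Let P be a countable poset. If some second countable Stone space W admits a good P-partition, then P is ω-complete: every ascending sequence p_1 ≤ p_2 ≤ p_3 ≤ ⋯ in P has a least upper bound in P. -/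
open Set

variable {P W : Type*} [PartialOrder P] [TopologicalSpace W]

/-- If `P` is a countable poset and some second countable Stone space admits
a good `P`-partition, then `P` is ω-complete: every ascending sequence has a least upper
bound. -/
theorem omegaComplete_of_good [Countable P]
    (h : ∃ (W : Type) (_ : TopologicalSpace W),
      LocallyCompactSpace W ∧ TotallyDisconnectedSpace W ∧ T2Space W ∧
      SecondCountableTopology W ∧
      ∃ X : P → Set W, IsPPartition X ∧ (⋃ p, X p) = univ ∧
        ∀ p, closure (X p) = ⋃ q ≤ p, X q) :
    ∀ f : ℕ → P, Monotone f → ∃ q : P, IsLUB (range f) q := by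
  obtain ⟨W, tW, hLC, hTD, hT2, hSC, X, hpart, hcover, hclos⟩ := h
  intro f hf
  -- membership of closures in terms of labels
  have key : ∀ (p : P) (y : W), y ∈ closure (X p) ↔ ∃ r ≤ p, y ∈ X r := by
    intro p y
    rw [hclos p]
    simp [mem_iUnion]
  have eq_of_mem : ∀ {a b : P} {y : W}, y ∈ X a → y ∈ X b → a = b := by
    intro a b y ha hb
    by_contra hne
    exact absurd hb (Set.disjoint_left.mp (hpart.pairwise_disjoint hne) ha)
  set T : Set W := closure (⋃ n, X (f n)) with hTdef
  have hXT : ∀ n, X (f n) ⊆ T := fun n =>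
    (subset_iUnion (fun n => X (f n)) n).trans subset_closure
  haveI : LocallyCompactSpace T := isClosed_closure.locallyCompactSpace
  haveI : Nonempty T := by
    obtain ⟨x, hx⟩ := hpart.nonempty (f 0)
    exact ⟨⟨x, hXT 0 hx⟩⟩
  -- Baire category: one of the closures of T ∩ X p has interior in T
  have hBaire : ∃ p : P, (interior (closure ((↑) ⁻¹' X p : Set T))).Nonempty := by
    apply nonempty_interior_of_iUnion_of_closed (fun p => isClosed_closure)
    rw [eq_univ_iff_forall]
    intro t
    have : (t : W) ∈ ⋃ p, X p := hcover ▸ mem_univ _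
    obtain ⟨p, hp⟩ := mem_iUnion.mp this
    exact mem_iUnion.mpr ⟨p, subset_closure hp⟩
  obtain ⟨p, w, hw⟩ := hBaire
  -- points of the closure of T ∩ X p have labels below p
  have hFsub : ∀ t : T, t ∈ closure ((↑) ⁻¹' X p : Set T) → ∃ r ≤ p, (t : W) ∈ X r := by
    intro t ht
    exact (key p t).mp (continuous_subtype_val.closure_preimage_subset (X p) ht)
  -- extract an open set of W realizing the interior
  obtain ⟨O, hOopen, hOU⟩ := isOpen_induced_iff.mp
    (isOpen_interior (s := closure ((↑) ⁻¹' X p : Set T)))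
  have hwO : (w : W) ∈ O := by rw [← hOU] at hw; exact hw
  -- O meets the union of the chain levels
  have hwT : (w : W) ∈ closure (⋃ n, X (f n)) := w.2
  obtain ⟨x, hxO, hxU⟩ := mem_closure_iff.mp hwT O hOopen hwO
  obtain ⟨n, hxn⟩ := mem_iUnion.mp hxU
  -- p is an upper bound of the chain
  have hub : ∀ m, f m ≤ p := by
    have hub' : ∀ k, n ≤ k → f k ≤ p := by
      intro k hk
      have hxcl : x ∈ closure (X (f k)) := (key (f k) x).mpr ⟨f n, hf hk, hxn⟩
      obtain ⟨y, hyO, hyX⟩ := mem_closure_iff.mp hxcl O hOopen hxO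
      have hyT : y ∈ T := hXT k hyX
      have : (⟨y, hyT⟩ : T) ∈ interior (closure ((↑) ⁻¹' X p : Set T)) := by
        rw [← hOU]; exact hyO
      obtain ⟨r, hrp, hyr⟩ := hFsub ⟨y, hyT⟩ (interior_subset this)
      exact (eq_of_mem hyX hyr) ▸ hrp
    intro m
    exact le_trans (hf (le_max_left m n)) (hub' (max m n) (le_max_right m n))
  -- there is a point of T with label exactly p
  have hne : ((↑) ⁻¹' X p : Set T).Nonempty :=
    closure_nonempty_iff.mp ⟨w, interior_subset hw⟩
  obtain ⟨t0, ht0⟩ := hne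
  refine ⟨p, ⟨?_, ?_⟩⟩
  · rintro q ⟨m, rfl⟩
    exact hub m
  · intro r hr
    have hTsub : T ⊆ closure (X r) := by
      apply closure_minimal _ isClosed_closure
      apply iUnion_subset
      intro m z hz
      exact (key r z).mpr ⟨f m, hr ⟨m, rfl⟩, hz⟩
    obtain ⟨s, hsr, hts⟩ := (key r t0).mp (hTsub t0.2)
    exact (eq_of_mem ht0 hts) ▸ hsr
end

section
/- Let W be a Stone space with Boolean ring R of compact open subsets, P a poset, and T : R → 2^P a function satisfying: (1) T(A) = ∅ iff A = ∅; (2) for each p ∈ P there is A ∈ R with p ∈ T(A); (3) T(A ∪ B) = T(A) ∪ T(B) for all A, B ∈ R; (4) if p ∈ T(A) then there is B ∈ R with B ⊆ A and T(B) = {q ∈ P | q ≥ p}; (5) every A ∈ R is a finite union of sets B ∈ R with T(B) = {q ∈ P | q ≥ p} for some p ∈ P. Then there is a unique trim P-partition of W whose type function is T (i.e. T(A) = {p ∈ P | A ∩ X_p ≠ ∅} for all A ∈ R), and this partition is complete if and only if P satisfies the ascending chain condition. -/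
open Set

variable {P W : Type*} [PartialOrder P] [TopologicalSpace W]

/-- A trim `P`-partition: every point of `W` has a neighbourhood base of trim sets, every
point of `X p` has a `p`-trim neighbourhood, and the partition is full. -/
structure IsTrimPartition (X : P → Set W) extends IsPPartition X : Prop where
  nhds_base : ∀ w : W, ∀ U ∈ nhds w, ∃ p A, IsTrimSet X p A ∧ w ∈ A ∧ A ⊆ U
  clean : ∀ p, ∀ x ∈ X p, ∃ A, IsTrimSet X p A ∧ x ∈ A
  full : ∀ p : P, ∀ w : W,
    (∀ U ∈ nhds w, ∃ A, IsTrimSet X p A ∧ w ∈ A ∧ A ⊆ U) → w ∈ X p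

set_option linter.unusedSectionVars false

/-- A "good" set for the type function `T`: compact open with `T A = Ici p`. -/
def TGood (T : Set W → Set P) (p : P) (A : Set W) : Prop :=
  IsCompact A ∧ IsOpen A ∧ T A = Ici p

/-- The candidate partition: points with a neighbourhood base of `p`-good sets. -/
def TXset (T : Set W → Set P) (p : P) : Set W :=
  {w | ∀ U ∈ nhds w, ∃ D, TGood T p D ∧ w ∈ D ∧ D ⊆ U}

section Aux

variable [LocallyCompactSpace W] [TotallyDisconnectedSpace W] [T2Space W]

lemma exists_compact_open_nhds (w : W) {U : Set W} (hU : U ∈ nhds w) :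
    ∃ C : Set W, IsCompact C ∧ IsOpen C ∧ w ∈ C ∧ C ⊆ U := by
  obtain ⟨K, hKn, hKU, hKc⟩ := local_compact_nhds hU
  obtain ⟨V, hV, hwV, hVK⟩ :=
    loc_compact_Haus_tot_disc_of_zero_dim.mem_nhds_iff.1 hKn
  exact ⟨V, hKc.of_isClosed_subset hV.1 hVK, hV.2, hwV, hVK.trans hKU⟩

variable (T : Set W → Set P)

lemma Tmono (h3 : ∀ A B : Set W, IsCompact A → IsOpen A → IsCompact B → IsOpen B →
      T (A ∪ B) = T A ∪ T B)
    {A B : Set W} (hAc : IsCompact A) (hAo : IsOpen A) (hBc : IsCompact B) (hBo : IsOpen B)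
    (hAB : A ⊆ B) : T A ⊆ T B := by
  have h := h3 A B hAc hAo hBc hBo
  rw [union_eq_self_of_subset_left hAB] at h
  rw [h]; exact subset_union_left

lemma T_empty (h1 : ∀ A : Set W, IsCompact A → IsOpen A → (T A = ∅ ↔ A = ∅)) :
    T ∅ = ∅ := (h1 ∅ isCompact_empty isOpen_empty).2 rfl

lemma TGood.nonempty' (h1 : ∀ A : Set W, IsCompact A → IsOpen A → (T A = ∅ ↔ A = ∅))
    {p : P} {A : Set W} (hG : TGood T p A) : A.Nonempty := by
  rcases eq_empty_or_nonempty A with h | h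
  · exfalso
    have hp : p ∈ T A := by rw [hG.2.2]; exact mem_Ici.2 le_rfl
    rw [h, T_empty T h1] at hp
    exact hp
  · exact h

end Aux

set_option linter.unusedSectionVars false

section Aux2

variable [LocallyCompactSpace W] [TotallyDisconnectedSpace W] [T2Space W]
variable (T : Set W → Set P)
variable (h1 : ∀ A : Set W, IsCompact A → IsOpen A → (T A = ∅ ↔ A = ∅))
variable (h3 : ∀ A B : Set W, IsCompact A → IsOpen A → IsCompact B → IsOpen B →
      T (A ∪ B) = T A ∪ T B)
variable (h5 : ∀ A : Set W, IsCompact A → IsOpen A →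
      ∃ (n : ℕ) (B : Fin n → Set W) (p : Fin n → P),
        (∀ i, IsCompact (B i) ∧ IsOpen (B i) ∧ T (B i) = Ici (p i)) ∧ A = ⋃ i, B i)

include h3 h5 in
lemma mem_TXset_of {p : P} {A : Set W} {w : W} (hG : TGood T p A) (hw : w ∈ A)
    (hT : ∀ C : Set W, IsCompact C → IsOpen C → w ∈ C → C ⊆ A → p ∈ T C) :
    w ∈ TXset T p := by
  intro U hU
  obtain ⟨C, hCc, hCo, hwC, hCU⟩ :=
    exists_compact_open_nhds w (Filter.inter_mem hU (hG.2.1.mem_nhds hw))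
  obtain ⟨n, B, q, hB, hCeq⟩ := h5 C hCc hCo
  have hwC' : w ∈ ⋃ i, B i := hCeq ▸ hwC
  obtain ⟨i, hi⟩ := mem_iUnion.1 hwC'
  have hBiC : B i ⊆ C := by rw [hCeq]; exact subset_iUnion B i
  have hBA : B i ⊆ A := hBiC.trans (hCU.trans inter_subset_right)
  have hle : q i ≤ p := by
    have := hT (B i) (hB i).1 (hB i).2.1 hi hBA
    rwa [(hB i).2.2, mem_Ici] at this
  have hge : p ≤ q i := by
    have hq : q i ∈ T (B i) := by rw [(hB i).2.2]; exact mem_Ici.2 le_rfl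
    have := Tmono T h3 (hB i).1 (hB i).2.1 hG.1 hG.2.1 hBA hq
    rwa [hG.2.2, mem_Ici] at this
  have hqp : q i = p := le_antisymm hle hge
  exact ⟨B i, ⟨(hB i).1, (hB i).2.1, by rw [(hB i).2.2, hqp]⟩, hi,
    hBiC.trans (hCU.trans inter_subset_left)⟩

end Aux2

section Aux3

variable [LocallyCompactSpace W] [TotallyDisconnectedSpace W] [T2Space W]
variable (T : Set W → Set P)
variable (h1 : ∀ A : Set W, IsCompact A → IsOpen A → (T A = ∅ ↔ A = ∅))
variable (h3 : ∀ A B : Set W, IsCompact A → IsOpen A → IsCompact B → IsOpen B →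
      T (A ∪ B) = T A ∪ T B)
variable (h4 : ∀ A : Set W, IsCompact A → IsOpen A → ∀ p ∈ T A,
      ∃ B ⊆ A, IsCompact B ∧ IsOpen B ∧ T B = Ici p)
variable (h5 : ∀ A : Set W, IsCompact A → IsOpen A →
      ∃ (n : ℕ) (B : Fin n → Set W) (p : Fin n → P),
        (∀ i, IsCompact (B i) ∧ IsOpen (B i) ∧ T (B i) = Ici (p i)) ∧ A = ⋃ i, B i)

include h1 h3 h4 h5 in
/-- Key existence lemma: every good set contains a point of the candidate partition. -/
lemma exists_mem_TXset {p : P} {A : Set W} (hG : TGood T p A) :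
    ∃ w ∈ A, w ∈ TXset T p := by
  classical
  set S : Set (Set (Set W)) := {F | A ∈ F ∧ (∀ B ∈ F, IsCompact B ∧ IsOpen B ∧ p ∈ T B) ∧
    ∀ B1 ∈ F, ∀ B2 ∈ F, B1 ∩ B2 ∈ F} with hSdef
  have hAS : ({A} : Set (Set W)) ∈ S := by
    refine ⟨rfl, ?_, ?_⟩
    · rintro B rfl
      exact ⟨hG.1, hG.2.1, by rw [hG.2.2]; exact mem_Ici.2 le_rfl⟩
    · rintro B1 rfl B2 rfl
      simp
  obtain ⟨F, -, hMax⟩ := zorn_subset_nonempty S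
    (fun c hcS hchain hcne => by
      obtain ⟨F0, hF0⟩ := hcne
      refine ⟨⋃₀ c, ⟨⟨F0, hF0, (hcS hF0).1⟩, ?_, ?_⟩, fun s hs => subset_sUnion_of_mem hs⟩
      · rintro B ⟨F1, hF1, hBF1⟩
        exact (hcS hF1).2.1 B hBF1
      · rintro B1 ⟨F1, hF1, hB1⟩ B2 ⟨F2, hF2, hB2⟩
        rcases hchain.total hF1 hF2 with h | h
        · exact ⟨F2, hF2, (hcS hF2).2.2 B1 (h hB1) B2 hB2⟩
        · exact ⟨F1, hF1, (hcS hF1).2.2 B1 hB1 B2 (h hB2)⟩)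
    {A} hAS
  have hFS : F ∈ S := hMax.1
  obtain ⟨hAF, hFprop, hFinter⟩ := hFS
  have hne : ∀ B ∈ F, (B : Set W).Nonempty := by
    intro B hB
    rcases eq_empty_or_nonempty B with h | h
    · exfalso
      have := (hFprop B hB).2.2
      rw [h, T_empty T h1] at this
      exact this
    · exact h
  haveI : Nonempty F := ⟨⟨A, hAF⟩⟩
  obtain ⟨w, hw⟩ := IsCompact.nonempty_iInter_of_directed_nonempty_isCompact_isClosed
    (fun B : F => (B : Set W))
    (fun B1 B2 => ⟨⟨B1.1 ∩ B2.1, hFinter _ B1.2 _ B2.2⟩, inter_subset_left, inter_subset_right⟩)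
    (fun B => hne _ B.2) (fun B => (hFprop _ B.2).1) (fun B => (hFprop _ B.2).1.isClosed)
  have hwF : ∀ B ∈ F, w ∈ B := fun B hB => mem_iInter.1 hw ⟨B, hB⟩
  -- key claim
  have key : ∀ C : Set W, IsCompact C → IsOpen C → w ∈ C → ∀ B ∈ F, p ∈ T (B ∩ C) := by
    intro C hCc hCo hwC
    by_contra hcon
    push_neg at hcon
    obtain ⟨B0, hB0, hB0p⟩ := hcon
    have hCcl : IsClosed C := hCc.isClosed
    have hdiff_c : IsCompact (B0 \ C) :=
      (hFprop B0 hB0).1.of_isClosed_subset ((hFprop B0 hB0).1.isClosed.sdiff hCo) diff_subset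
    have hdiff_o : IsOpen (B0 \ C) := (hFprop B0 hB0).2.1.sdiff hCcl
    have hBC_prop : ∀ B ∈ F, p ∈ T (B ∩ (B0 \ C)) := by
      intro B hB
      have hBB0 : B ∩ B0 ∈ F := hFinter _ hB _ hB0
      have hc1 : IsCompact ((B ∩ B0) ∩ C) := (hFprop _ hBB0).1.inter_right hCcl
      have ho1 : IsOpen ((B ∩ B0) ∩ C) := (hFprop _ hBB0).2.1.inter hCo
      have hc2 : IsCompact ((B ∩ B0) \ C) :=
        (hFprop _ hBB0).1.of_isClosed_subset ((hFprop _ hBB0).1.isClosed.sdiff hCo) diff_subset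
      have ho2 : IsOpen ((B ∩ B0) \ C) := (hFprop _ hBB0).2.1.sdiff hCcl
      have hsplit := h3 _ _ hc1 ho1 hc2 ho2
      rw [inter_union_diff] at hsplit
      have hp : p ∈ T (B ∩ B0) := (hFprop _ hBB0).2.2
      rw [hsplit] at hp
      rcases hp with hp | hp
      · exfalso
        refine hB0p (Tmono T h3 hc1 ho1 ((hFprop _ hB0).1.inter_right hCcl)
          ((hFprop _ hB0).2.1.inter hCo) ?_ hp)
        exact inter_subset_inter_left C inter_subset_right
      · rwa [inter_diff_assoc] at hp
    set F' : Set (Set W) := F ∪ {E | ∃ B ∈ F, E = B ∩ (B0 \ C)} with hF'def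
    have hF'S : F' ∈ S := by
      refine ⟨Or.inl hAF, ?_, ?_⟩
      · rintro B (hB | ⟨B', hB', rfl⟩)
        · exact hFprop B hB
        · exact ⟨(hFprop _ hB').1.inter_right (hdiff_c.isClosed),
            (hFprop _ hB').2.1.inter hdiff_o, hBC_prop _ hB'⟩
      · rintro B1 (hB1 | ⟨B1', hB1', rfl⟩) B2 (hB2 | ⟨B2', hB2', rfl⟩)
        · exact Or.inl (hFinter _ hB1 _ hB2)
        · exact Or.inr ⟨B1 ∩ B2', hFinter _ hB1 _ hB2', by rw [inter_assoc]⟩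
        · exact Or.inr ⟨B1' ∩ B2, hFinter _ hB1' _ hB2, by
            ext x; simp only [mem_inter_iff, mem_diff]; tauto⟩
        · exact Or.inr ⟨B1' ∩ B2', hFinter _ hB1' _ hB2', by
            ext x; simp only [mem_inter_iff, mem_diff]; tauto⟩
    have hFF' : F' ⊆ F := hMax.2 hF'S subset_union_left
    have hmem : B0 \ C ∈ F := hFF' (Or.inr ⟨B0, hB0, by rw [inter_eq_right.2 diff_subset]⟩)
    exact (hwF _ hmem).2 hwC
  refine ⟨w, hwF A hAF, mem_TXset_of T h3 h5 hG (hwF A hAF) ?_⟩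
  intro C hCc hCo hwC hCA
  have := key C hCc hCo hwC A hAF
  rwa [inter_eq_self_of_subset_right hCA] at this

end Aux3

section Aux4

variable [LocallyCompactSpace W] [TotallyDisconnectedSpace W] [T2Space W]
variable (T : Set W → Set P)
variable (h1 : ∀ A : Set W, IsCompact A → IsOpen A → (T A = ∅ ↔ A = ∅))
variable (h2 : ∀ p : P, ∃ A : Set W, IsCompact A ∧ IsOpen A ∧ p ∈ T A)
variable (h3 : ∀ A B : Set W, IsCompact A → IsOpen A → IsCompact B → IsOpen B →
      T (A ∪ B) = T A ∪ T B)
variable (h4 : ∀ A : Set W, IsCompact A → IsOpen A → ∀ p ∈ T A,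
      ∃ B ⊆ A, IsCompact B ∧ IsOpen B ∧ T B = Ici p)
variable (h5 : ∀ A : Set W, IsCompact A → IsOpen A →
      ∃ (n : ℕ) (B : Fin n → Set W) (p : Fin n → P),
        (∀ i, IsCompact (B i) ∧ IsOpen (B i) ∧ T (B i) = Ici (p i)) ∧ A = ⋃ i, B i)

include h1 h3 h4 h5 in
lemma ptype_TXset_eq {A : Set W} (hc : IsCompact A) (ho : IsOpen A) :
    ptype (TXset T) A = T A := by
  ext q
  constructor
  · rintro ⟨w, hwA, hwX⟩
    obtain ⟨D, hD, hwD, hDA⟩ := hwX A (ho.mem_nhds hwA)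
    have hq : q ∈ T D := by rw [hD.2.2]; exact mem_Ici.2 le_rfl
    exact Tmono T h3 hD.1 hD.2.1 hc ho hDA hq
  · intro hq
    obtain ⟨B, hBA, hBc, hBo, hBT⟩ := h4 A hc ho q hq
    obtain ⟨w, hwB, hwX⟩ := exists_mem_TXset T h1 h3 h4 h5 ⟨hBc, hBo, hBT⟩
    exact ⟨w, hBA hwB, hwX⟩

include h1 h3 h4 h5 in
lemma isTrimSet_TXset_iff {p : P} {A : Set W} :
    IsTrimSet (TXset T) p A ↔ TGood T p A := by
  constructor
  · rintro ⟨hc, ho, h⟩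
    exact ⟨hc, ho, by rw [← ptype_TXset_eq T h1 h3 h4 h5 hc ho]; exact h⟩
  · rintro ⟨hc, ho, h⟩
    exact ⟨hc, ho, by rw [ptype_TXset_eq T h1 h3 h4 h5 hc ho]; exact h⟩

include h1 h2 h3 h4 h5 in
lemma isTrimPartition_TXset : IsTrimPartition (TXset T) := by
  have trimIff := fun {p : P} {A : Set W} => isTrimSet_TXset_iff T h1 h3 h4 h5 (p := p) (A := A)
  refine ⟨⟨?_, ?_⟩, ?_, ?_, ?_⟩
  · -- nonempty
    intro p
    obtain ⟨A, hc, ho, hp⟩ := h2 p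
    obtain ⟨B, hBA, hBc, hBo, hBT⟩ := h4 A hc ho p hp
    obtain ⟨w, -, hwX⟩ := exists_mem_TXset T h1 h3 h4 h5 ⟨hBc, hBo, hBT⟩
    exact ⟨w, hwX⟩
  · -- pairwise disjoint
    intro p q hpq
    rw [Set.disjoint_left]
    intro w hwp hwq
    refine hpq ?_
    obtain ⟨D, hD, hwD, -⟩ := hwp univ Filter.univ_mem
    obtain ⟨D', hD', hwD', hD'D⟩ := hwq D (hD.2.1.mem_nhds hwD)
    obtain ⟨D'', hD'', hwD'', hD''D'⟩ := hwp D' (hD'.2.1.mem_nhds hwD')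
    have hle : p ≤ q := by
      have : q ∈ T D' := by rw [hD'.2.2]; exact mem_Ici.2 le_rfl
      have := Tmono T h3 hD'.1 hD'.2.1 hD.1 hD.2.1 hD'D this
      rwa [hD.2.2, mem_Ici] at this
    have hge : q ≤ p := by
      have : p ∈ T D'' := by rw [hD''.2.2]; exact mem_Ici.2 le_rfl
      have := Tmono T h3 hD''.1 hD''.2.1 hD'.1 hD'.2.1 hD''D' this
      rwa [hD'.2.2, mem_Ici] at this
    exact le_antisymm hle hge
  · -- nhds_base
    intro w U hU
    obtain ⟨C, hCc, hCo, hwC, hCU⟩ := exists_compact_open_nhds w hU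
    obtain ⟨n, B, q, hB, hCeq⟩ := h5 C hCc hCo
    have hwC' : w ∈ ⋃ i, B i := hCeq ▸ hwC
    obtain ⟨i, hi⟩ := mem_iUnion.1 hwC'
    have hBiC : B i ⊆ C := by rw [hCeq]; exact subset_iUnion B i
    exact ⟨q i, B i, trimIff.2 ⟨(hB i).1, (hB i).2.1, (hB i).2.2⟩, hi, hBiC.trans hCU⟩
  · -- clean
    intro p x hx
    obtain ⟨D, hD, hxD, -⟩ := hx univ Filter.univ_mem
    exact ⟨D, trimIff.2 hD, hxD⟩
  · -- full
    intro p w hw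
    intro U hU
    obtain ⟨A, hA, hwA, hAU⟩ := hw U hU
    exact ⟨A, trimIff.1 hA, hwA, hAU⟩

end Aux4

section Aux5

variable [LocallyCompactSpace W] [TotallyDisconnectedSpace W] [T2Space W]
variable (T : Set W → Set P)
variable (h1 : ∀ A : Set W, IsCompact A → IsOpen A → (T A = ∅ ↔ A = ∅))
variable (h2 : ∀ p : P, ∃ A : Set W, IsCompact A ∧ IsOpen A ∧ p ∈ T A)
variable (h3 : ∀ A B : Set W, IsCompact A → IsOpen A → IsCompact B → IsOpen B →
      T (A ∪ B) = T A ∪ T B)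
variable (h4 : ∀ A : Set W, IsCompact A → IsOpen A → ∀ p ∈ T A,
      ∃ B ⊆ A, IsCompact B ∧ IsOpen B ∧ T B = Ici p)
variable (h5 : ∀ A : Set W, IsCompact A → IsOpen A →
      ∃ (n : ℕ) (B : Fin n → Set W) (p : Fin n → P),
        (∀ i, IsCompact (B i) ∧ IsOpen (B i) ∧ T (B i) = Ici (p i)) ∧ A = ⋃ i, B i)

include h1 h3 in
lemma T_finset_biUnion {ι : Type*} (t : Finset ι) (D : ι → Set W)
    (hD : ∀ i ∈ t, IsCompact (D i) ∧ IsOpen (D i)) :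
    IsCompact (⋃ i ∈ t, D i) ∧ IsOpen (⋃ i ∈ t, D i) ∧
      T (⋃ i ∈ t, D i) = ⋃ i ∈ t, T (D i) := by
  classical
  induction t using Finset.induction_on with
  | empty => simp [T_empty T h1, isCompact_empty]
  | @insert a s ha ih =>
    have hD' : ∀ i ∈ s, IsCompact (D i) ∧ IsOpen (D i) :=
      fun i hi => hD i (Finset.mem_insert_of_mem hi)
    obtain ⟨hc, ho, hT⟩ := ih hD'
    have hDa := hD a (Finset.mem_insert_self a s)
    rw [Finset.set_biUnion_insert]
    refine ⟨hDa.1.union hc, hDa.2.union ho, ?_⟩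
    rw [h3 _ _ hDa.1 hDa.2 hc ho, hT, Finset.set_biUnion_insert]

include h1 h2 h3 h4 h5 in
/-- If the candidate partition covers `W`, then `P` has no strictly increasing sequence. -/
lemma no_strictMono_of_cover (hcov : (⋃ p, TXset T p) = univ)
    (f : ℕ → P) (hf : StrictMono f) : False := by
  classical
  -- build a nested sequence of good sets
  have hA0 : ∃ A, TGood T (f 0) A := by
    obtain ⟨A, hc, ho, hp⟩ := h2 (f 0)
    obtain ⟨B, -, hBc, hBo, hBT⟩ := h4 A hc ho (f 0) hp
    exact ⟨B, hBc, hBo, hBT⟩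
  have step : ∀ n, ∀ A : Set W, TGood T (f n) A →
      ∃ B, TGood T (f (n+1)) B ∧ B ⊆ A := by
    intro n A hA
    have hfn : f (n+1) ∈ T A := by
      rw [hA.2.2]; exact mem_Ici.2 (hf.monotone (Nat.le_succ n))
    obtain ⟨B, hBA, hBc, hBo, hBT⟩ := h4 A hA.1 hA.2.1 (f (n+1)) hfn
    exact ⟨B, ⟨hBc, hBo, hBT⟩, hBA⟩
  choose stepB hstepG hstepS using step
  obtain ⟨A0, hA0⟩ := hA0
  let seq : ∀ n : ℕ, {A : Set W // TGood T (f n) A} := fun n =>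
    Nat.rec ⟨A0, hA0⟩ (fun n s => ⟨stepB n s.1 s.2, hstepG n s.1 s.2⟩) n
  set A : ℕ → Set W := fun n => (seq n).1 with hAdef
  have hAG : ∀ n, TGood T (f n) (A n) := fun n => (seq n).2
  have hAsucc : ∀ n, A (n+1) ⊆ A n := fun n => hstepS n (seq n).1 (seq n).2
  have hAanti : Antitone A := antitone_nat_of_succ_le hAsucc
  -- the intersection is nonempty compact
  set K : Set W := ⋂ n, A n with hKdef
  have hKne : K.Nonempty := by
    apply IsCompact.nonempty_iInter_of_directed_nonempty_isCompact_isClosed A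
      (fun m n => ⟨max m n, hAanti (le_max_left m n), hAanti (le_max_right m n)⟩)
      (fun n => (hAG n).nonempty' T h1) (fun n => (hAG n).1) (fun n => (hAG n).1.isClosed)
  have hKc : IsCompact K := (hAG 0).1.of_isClosed_subset
    (isClosed_iInter fun n => (hAG n).1.isClosed) (iInter_subset A 0)
  -- every point of K lies in some X q with f n ≤ q for all n, with a good-q nbhd
  have hpt : ∀ w : K, ∃ q : P, ∃ D : Set W, TGood T q D ∧ (w : W) ∈ D ∧ ∀ n, f n ≤ q := by
    rintro ⟨w, hw⟩
    have : w ∈ ⋃ p, TXset T p := hcov ▸ mem_univ w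
    obtain ⟨q, hq⟩ := mem_iUnion.1 this
    obtain ⟨D, hD, hwD, -⟩ := hq univ Filter.univ_mem
    refine ⟨q, D, hD, hwD, fun n => ?_⟩
    have hwAn : w ∈ A n := mem_iInter.1 hw n
    obtain ⟨D', hD', hwD', hD'A⟩ := hq (A n) ((hAG n).2.1.mem_nhds hwAn)
    have : q ∈ T D' := by rw [hD'.2.2]; exact mem_Ici.2 le_rfl
    have := Tmono T h3 hD'.1 hD'.2.1 (hAG n).1 (hAG n).2.1 hD'A this
    rwa [(hAG n).2.2, mem_Ici] at this
  choose q D hDG hwD hfq using hpt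
  -- finite subcover of K
  obtain ⟨t, ht⟩ := hKc.elim_finite_subcover D (fun w => (hDG w).2.1)
    (fun x hx => mem_iUnion.2 ⟨⟨x, hx⟩, hwD ⟨x, hx⟩⟩)
  obtain ⟨hEc, hEo, hET⟩ := T_finset_biUnion T h1 h3 t D (fun i _ => ⟨(hDG i).1, (hDG i).2.1⟩)
  set E : Set W := ⋃ i ∈ t, D i with hEdef
  -- some A n is contained in E
  have hKE : K ⊆ E := ht
  have hAE : ∃ n, A n ⊆ E := by
    by_contra hcon
    push_neg at hcon
    have hnoE : (⋂ n, A n \ E).Nonempty := by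
      apply IsCompact.nonempty_iInter_of_directed_nonempty_isCompact_isClosed
        (fun n => A n \ E)
        (fun m n => ⟨max m n, diff_subset_diff_left (hAanti (le_max_left m n)),
          diff_subset_diff_left (hAanti (le_max_right m n))⟩)
        (fun n => diff_nonempty.2 (hcon n))
        (fun n => (hAG n).1.of_isClosed_subset ((hAG n).1.isClosed.sdiff hEo) diff_subset)
        (fun n => (hAG n).1.isClosed.sdiff hEo)
    obtain ⟨x, hx⟩ := hnoE
    exact (mem_iInter.1 hx 0).2 (hKE (mem_iInter.2 fun n => (mem_iInter.1 hx n).1))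
  obtain ⟨n, hAnE⟩ := hAE
  have hfn : f n ∈ T (A n) := by rw [(hAG n).2.2]; exact mem_Ici.2 le_rfl
  have hfnE : f n ∈ T E := Tmono T h3 (hAG n).1 (hAG n).2.1 hEc hEo hAnE hfn
  rw [hET] at hfnE
  obtain ⟨i, hit, hfi⟩ := mem_iUnion₂.1 hfnE
  rw [(hDG i).2.2, mem_Ici] at hfi
  exact absurd ((hf (Nat.lt_succ_self n)).trans_le ((hfq i (n+1)).trans hfi)) (lt_irrefl _)

end Aux5

section Aux6

variable [LocallyCompactSpace W] [TotallyDisconnectedSpace W] [T2Space W]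
variable (T : Set W → Set P)
variable (h1 : ∀ A : Set W, IsCompact A → IsOpen A → (T A = ∅ ↔ A = ∅))
variable (h2 : ∀ p : P, ∃ A : Set W, IsCompact A ∧ IsOpen A ∧ p ∈ T A)
variable (h3 : ∀ A B : Set W, IsCompact A → IsOpen A → IsCompact B → IsOpen B →
      T (A ∪ B) = T A ∪ T B)
variable (h4 : ∀ A : Set W, IsCompact A → IsOpen A → ∀ p ∈ T A,
      ∃ B ⊆ A, IsCompact B ∧ IsOpen B ∧ T B = Ici p)
variable (h5 : ∀ A : Set W, IsCompact A → IsOpen A →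
      ∃ (n : ℕ) (B : Fin n → Set W) (p : Fin n → P),
        (∀ i, IsCompact (B i) ∧ IsOpen (B i) ∧ T (B i) = Ici (p i)) ∧ A = ⋃ i, B i)

include h3 h5 in
/-- If `P` has no strictly increasing sequence, the candidate partition covers `W`. -/
lemma cover_of_no_strictMono (hns : ∀ f : ℕ → P, ¬ StrictMono f) :
    (⋃ p, TXset T p) = univ := by
  classical
  rw [eq_univ_iff_forall]
  intro w
  by_contra hw
  rw [mem_iUnion] at hw
  push_neg at hw
  -- w has some good neighbourhood
  set R : P → Prop := fun r => ∃ D, TGood T r D ∧ w ∈ D with hRdef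
  have hinit : ∃ r, R r := by
    obtain ⟨C, hCc, hCo, hwC, -⟩ := exists_compact_open_nhds w (Filter.univ_mem (f := nhds w))
    obtain ⟨n, B, qq, hB, hCeq⟩ := h5 C hCc hCo
    have hwC' : w ∈ ⋃ i, B i := hCeq ▸ hwC
    obtain ⟨i, hi⟩ := mem_iUnion.1 hwC'
    exact ⟨qq i, B i, ⟨(hB i).1, (hB i).2.1, (hB i).2.2⟩, hi⟩
  -- from any good neighbourhood we can reach a strictly larger label
  have key : ∀ r, R r → ∃ r', r < r' ∧ R r' := by
    rintro r ⟨D, hD, hwD⟩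
    have hwn : w ∉ TXset T r := hw r
    rw [TXset, mem_setOf_eq] at hwn
    push_neg at hwn
    obtain ⟨U, hU, hUprop⟩ := hwn
    obtain ⟨C, hCc, hCo, hwC, hCUD⟩ :=
      exists_compact_open_nhds w (Filter.inter_mem hU (hD.2.1.mem_nhds hwD))
    obtain ⟨n, B, qq, hB, hCeq⟩ := h5 C hCc hCo
    have hwC' : w ∈ ⋃ i, B i := hCeq ▸ hwC
    obtain ⟨i, hi⟩ := mem_iUnion.1 hwC'
    have hBiC : B i ⊆ C := by rw [hCeq]; exact subset_iUnion B i
    have hBiD : B i ⊆ D := hBiC.trans (hCUD.trans inter_subset_right)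
    have hBiU : B i ⊆ U := hBiC.trans (hCUD.trans inter_subset_left)
    have hle : r ≤ qq i := by
      have : qq i ∈ T (B i) := by rw [(hB i).2.2]; exact mem_Ici.2 le_rfl
      have := Tmono T h3 (hB i).1 (hB i).2.1 hD.1 hD.2.1 hBiD this
      rwa [hD.2.2, mem_Ici] at this
    have hne : r ≠ qq i := by
      rintro rfl
      exact hUprop (B i) ⟨(hB i).1, (hB i).2.1, (hB i).2.2⟩ hi hBiU
    exact ⟨qq i, lt_of_le_of_ne hle hne, B i, ⟨(hB i).1, (hB i).2.1, (hB i).2.2⟩, hi⟩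
  choose next hlt hR using key
  obtain ⟨r0, hr0⟩ := hinit
  let g : {r // R r} → {r // R r} := fun s => ⟨next s.1 s.2, hR s.1 s.2⟩
  let f : ℕ → P := fun n => (g^[n] ⟨r0, hr0⟩).1
  refine hns f (strictMono_nat_of_lt_succ fun n => ?_)
  have : g^[n+1] ⟨r0, hr0⟩ = g (g^[n] ⟨r0, hr0⟩) := Function.iterate_succ_apply' g n _
  show f n < f (n+1)
  have h2' : f (n+1) = (g (g^[n] ⟨r0, hr0⟩)).1 := congrArg Subtype.val this
  rw [h2']
  exact hlt _ _

include h1 h3 h4 h5 in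
/-- Uniqueness: any trim partition with type function `T` equals the candidate. -/
lemma trim_unique (Y : P → Set W) (hY : IsTrimPartition Y)
    (hYT : ∀ A : Set W, IsCompact A → IsOpen A → ptype Y A = T A) : Y = TXset T := by
  have trimIffY : ∀ {p : P} {A : Set W}, IsTrimSet Y p A ↔ TGood T p A := by
    intro p A
    constructor
    · rintro ⟨hc, ho, h⟩
      exact ⟨hc, ho, by rw [← hYT A hc ho]; exact h⟩
    · rintro ⟨hc, ho, h⟩
      exact ⟨hc, ho, by rw [hYT A hc ho]; exact h⟩
  funext p
  apply Subset.antisymm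
  · -- Y p ⊆ TXset T p
    intro x hx
    obtain ⟨D0, hD0, hxD0⟩ := hY.clean p x hx
    have hD0G : TGood T p D0 := trimIffY.1 hD0
    intro U hU
    obtain ⟨q, D, hD, hxD, hDsub⟩ := hY.nhds_base x (U ∩ D0)
      (Filter.inter_mem hU (hD0G.2.1.mem_nhds hxD0))
    have hDG : TGood T q D := trimIffY.1 hD
    have hle : p ≤ q := by
      have : q ∈ T D := by rw [hDG.2.2]; exact mem_Ici.2 le_rfl
      have := Tmono T h3 hDG.1 hDG.2.1 hD0G.1 hD0G.2.1 (hDsub.trans inter_subset_right) this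
      rwa [hD0G.2.2, mem_Ici] at this
    have hge : q ≤ p := by
      have hp : p ∈ ptype Y D := ⟨x, hxD, hx⟩
      rw [hD.2.2, mem_Ici] at hp
      exact hp
    have : q = p := le_antisymm hge hle
    exact ⟨D, by rw [← this]; exact hDG, hxD, hDsub.trans inter_subset_left⟩
  · -- TXset T p ⊆ Y p
    intro x hx
    apply hY.full p x
    intro U hU
    obtain ⟨D, hD, hxD, hDU⟩ := hx U hU
    exact ⟨D, trimIffY.2 hD, hxD, hDU⟩

end Aux6


/-- (Type function theorem.) Let `W` be a Stone space and `T` a function on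
the compact open sets of `W` with values in `2^P` satisfying conditions (1)–(5). Then there is
a unique trim `P`-partition of `W` whose type function is `T`, and it is complete iff `P`
satisfies the ACC. -/
theorem trimPartition_of_typeFunction
    [LocallyCompactSpace W] [TotallyDisconnectedSpace W] [T2Space W]
    (T : Set W → Set P)
    (h1 : ∀ A : Set W, IsCompact A → IsOpen A → (T A = ∅ ↔ A = ∅))
    (h2 : ∀ p : P, ∃ A : Set W, IsCompact A ∧ IsOpen A ∧ p ∈ T A)
    (h3 : ∀ A B : Set W, IsCompact A → IsOpen A → IsCompact B → IsOpen B →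
      T (A ∪ B) = T A ∪ T B)
    (h4 : ∀ A : Set W, IsCompact A → IsOpen A → ∀ p ∈ T A,
      ∃ B ⊆ A, IsCompact B ∧ IsOpen B ∧ T B = Ici p)
    (h5 : ∀ A : Set W, IsCompact A → IsOpen A →
      ∃ (n : ℕ) (B : Fin n → Set W) (p : Fin n → P),
        (∀ i, IsCompact (B i) ∧ IsOpen (B i) ∧ T (B i) = Ici (p i)) ∧ A = ⋃ i, B i) :
    ∃ X : P → Set W,
      (IsTrimPartition X ∧ ∀ A : Set W, IsCompact A → IsOpen A → ptype X A = T A) ∧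
      ((⋃ p, X p) = univ ↔ ∀ f : ℕ → P, ¬ StrictMono f) ∧
      ∀ Y : P → Set W, IsTrimPartition Y →
        (∀ A : Set W, IsCompact A → IsOpen A → ptype Y A = T A) → Y = X := by
  classical
  refine ⟨TXset T, ⟨isTrimPartition_TXset T h1 h2 h3 h4 h5,
    fun A hc ho => ptype_TXset_eq T h1 h3 h4 h5 hc ho⟩, ?_, ?_⟩
  · constructor
    · intro hcov f hf
      exact (no_strictMono_of_cover T h1 h2 h3 h4 h5 hcov f hf).elim
    · exact cover_of_no_strictMono T h3 h5
  · intro Y hY hYT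
    exact trim_unique T h1 h3 h4 h5 Y hY hYT
end

section
/- Let P ⊆ Q be posets, W a Stone space, 𝒳 = {X_p | p ∈ P} a semi-trim P-partition of W and 𝒴 = {Y_q | q ∈ Q} a semi-trim Q-partition of W such that 𝒴 is a regular extension of 𝒳. Then a compact open set A ⊆ W is p-trim with respect to 𝒳 if and only if it is p-trim with respect to 𝒴 (in particular the trim sets of the two partitions coincide, with the same labels), and Q̂ = P̂. -/
open Set

variable {P W : Type*} [PartialOrder P] [TopologicalSpace W]

/-- Let `P ⊆ Q` be posets (modelled as a subset `Pset` of the poset `Q` with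
the induced order), `W` a Stone space, `𝒳` a semi-trim `Pset`-partition and `𝒴` a semi-trim
`Q`-partition of `W` with `𝒴` a regular extension of `𝒳`. Then a compact open set is `p`-trim
w.r.t. `𝒳` iff it is `p`-trim w.r.t. `𝒴`; every trim set of `𝒴` is trim for `𝒳` with the same
label; and `Q̂ = P̂`. -/
theorem regularExtension_same_trim
    {Q : Type*} [PartialOrder Q]
    [LocallyCompactSpace W] [TotallyDisconnectedSpace W] [T2Space W]
    (Pset : Set Q) (X : Pset → Set W) (Y : Q → Set W)
    (hX : IsSemiTrim X) (hY : IsSemiTrim Y)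
    (hreg1 : ∀ p : Pset, X p ⊆ Y ↑p)
    (hreg2 : ∀ (A : Set W) (p : Pset) (q : Q),
      IsTrimSet X p A → (A ∩ Y q).Nonempty → ↑p ≤ q) :
    (∀ (A : Set W) (p : Pset), IsTrimSet X p A ↔ IsTrimSet Y ↑p A) ∧
    (∀ (A : Set W) (q : Q), IsTrimSet Y q A →
      ∃ p : Pset, (p : Q) = q ∧ IsTrimSet X p A) ∧
    trimHat Y = Subtype.val '' trimHat X := by
  have fwd : ∀ (A : Set W) (p : Pset), IsTrimSet X p A → IsTrimSet Y ↑p A := by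
    rintro A p ⟨hc, ho, ht⟩
    refine ⟨hc, ho, ?_⟩
    ext q
    simp only [ptype, mem_setOf_eq, mem_Ici]
    constructor
    · intro h; exact hreg2 A p q ⟨hc, ho, ht⟩ h
    · intro hq
      have hp : (A ∩ X p).Nonempty := by
        have : p ∈ ptype X A := ht ▸ self_mem_Ici
        exact this
      obtain ⟨x, hxA, hxX⟩ := hp
      have hxY : x ∈ Y ↑p := hreg1 p hxX
      obtain ⟨r, B, hB, hxB, hBA⟩ := hY.nhds_base x A (ho.mem_nhds hxA)
      have hrp : r ≤ ↑p := by
        have h1 : (↑p : Q) ∈ ptype Y B := ⟨x, hxB, hxY⟩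
        rw [hB.2.2] at h1; exact h1
      have h2 : q ∈ ptype Y B := by rw [hB.2.2]; exact le_trans hrp hq
      obtain ⟨y, hyB, hyY⟩ := h2
      exact ⟨y, hBA hyB, hyY⟩
  have bwd : ∀ (A : Set W) (q : Q), IsTrimSet Y q A →
      ∃ p : Pset, (p : Q) = q ∧ IsTrimSet X p A := by
    rintro A q ⟨hc, ho, ht⟩
    have hq : (A ∩ Y q).Nonempty := by
      have : q ∈ ptype Y A := ht ▸ self_mem_Ici
      exact this
    obtain ⟨x, hxA, hxY⟩ := hq
    obtain ⟨r, B, hB, hxB, hBA⟩ := hX.nhds_base x A (ho.mem_nhds hxA)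
    have hBY := fwd B r hB
    have h1 : (r : Q) ≤ q := hreg2 B r q hB ⟨x, hxB, hxY⟩
    have h2 : q ≤ (r : Q) := by
      have hsub : ptype Y B ⊆ ptype Y A := by
        rintro s ⟨y, hyB, hyY⟩; exact ⟨y, hBA hyB, hyY⟩
      have hr : (r : Q) ∈ ptype Y A := hsub (by rw [hBY.2.2]; exact self_mem_Ici)
      rw [ht] at hr; exact hr
    have hrq : (r : Q) = q := le_antisymm h1 h2
    refine ⟨r, hrq, hc, ho, ?_⟩
    ext s
    simp only [ptype, mem_setOf_eq, mem_Ici]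
    constructor
    · rintro ⟨y, hyA, hyX⟩
      have hs : (s : Q) ∈ ptype Y A := ⟨y, hyA, hreg1 s hyX⟩
      rw [ht] at hs
      exact Subtype.coe_le_coe.mp (hrq ▸ hs)
    · intro hs
      have hsB : s ∈ ptype X B := by rw [hB.2.2]; exact hs
      obtain ⟨y, hyB, hyX⟩ := hsB
      exact ⟨y, hBA hyB, hyX⟩
  refine ⟨fun A p => ⟨fwd A p, fun h => ?_⟩, bwd, ?_⟩
  · obtain ⟨r, hr, hA⟩ := bwd A ↑p h
    rwa [Subtype.coe_injective hr] at hA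
  · ext q
    constructor
    · rintro ⟨A, hA⟩
      obtain ⟨r, hr, hA'⟩ := bwd A q hA
      exact ⟨r, ⟨A, hA'⟩, hr⟩
    · rintro ⟨r, ⟨A, hA⟩, rfl⟩
      exact ⟨A, fwd A r hA⟩
end

section
/- Let P be a poset and 𝒳 = {X_p | p ∈ P} a semi-trim P-partition of a Stone space W. Define the clean interior 𝒳° = {Z_q | q ∈ P̂}, where Z_q is the set of clean points of X_q. Then 𝒳° is a trim P̂-partition of W, 𝒳 is a regular extension of 𝒳°, and 𝒳 and 𝒳° give rise to the same trim sets with the same labels. -/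
open Set

variable {P W : Type*} [PartialOrder P] [TopologicalSpace W]

/-- Let `𝒳` be a semi-trim `P`-partition of a Stone space `W`, and let
`𝒳° = {Z q | q ∈ P̂}` be its clean interior, where `Z q` is the set of clean points of `X q`.
Then `𝒳°` is a trim `P̂`-partition of `W` (a semi-trim partition all of whose points are
clean), `𝒳` is a regular extension of `𝒳°`, and `𝒳` and `𝒳°` give rise to the same trim
sets with the same labels. -/
theorem cleanInterior_trim
    [LocallyCompactSpace W] [TotallyDisconnectedSpace W] [T2Space W]
    (X : P → Set W) (h : IsSemiTrim X)
    (Z : trimHat X → Set W)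
    (hZ : ∀ q : trimHat X, Z q = {x ∈ X ↑q | ∃ A, IsTrimSet X ↑q A ∧ x ∈ A}) :
    IsSemiTrim Z ∧
    (∀ q : trimHat X, ∀ x ∈ Z q, ∃ A, IsTrimSet Z q A ∧ x ∈ A) ∧
    (∀ q : trimHat X, Z q ⊆ X ↑q) ∧
    (∀ (A : Set W) (q : trimHat X) (p : P),
      IsTrimSet Z q A → (A ∩ X p).Nonempty → ↑q ≤ p) ∧
    (∀ (A : Set W) (q : trimHat X), IsTrimSet Z q A ↔ IsTrimSet X ↑q A) := by

  -- `Z q ⊆ X q`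
  have hZX : ∀ q : trimHat X, Z q ⊆ X ↑q := by
    intro q x hx; rw [hZ q] at hx; exact hx.1
  -- X-trim implies Z-trim
  have hXZ : ∀ (A : Set W) (q : trimHat X), IsTrimSet X ↑q A → IsTrimSet Z q A := by
    intro A q hA
    refine ⟨hA.1, hA.2.1, ?_⟩
    ext p
    constructor
    · rintro ⟨x, hxA, hxZ⟩
      have : (p : P) ∈ ptype X A := ⟨x, hxA, hZX p hxZ⟩
      rw [hA.2.2] at this
      exact Subtype.coe_le_coe.mp this
    · intro hqp
      have hpA : (p : P) ∈ ptype X A := by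
        rw [hA.2.2]; exact Subtype.coe_le_coe.mpr hqp
      obtain ⟨B, hBA, hB⟩ := h.trim_dense A hA.2.1 p ⟨hpA, p.2⟩
      have : (p : P) ∈ ptype X B := by rw [hB.2.2]; exact le_refl _
      obtain ⟨x, hxB, hxX⟩ := this
      refine ⟨x, hBA hxB, ?_⟩
      rw [hZ p]; exact ⟨hxX, B, hB, hxB⟩
  -- Z-trim implies X-trim
  have hZXt : ∀ (A : Set W) (q : trimHat X), IsTrimSet Z q A → IsTrimSet X ↑q A := by
    intro A q hA
    refine ⟨hA.1, hA.2.1, ?_⟩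
    ext p
    constructor
    · rintro ⟨x, hxA, hxX⟩
      obtain ⟨r, C, hC, hxC, hCA⟩ := h.nhds_base x A (hA.2.1.mem_nhds hxA)
      have hrp : r ≤ p := (h.label_sup p x hxX).1 ⟨C, hC, hxC⟩
      have hr : r ∈ trimHat X := ⟨C, hC⟩
      have hCZ : IsTrimSet Z ⟨r, hr⟩ C := hXZ C ⟨r, hr⟩ hC
      have : (⟨r, hr⟩ : trimHat X) ∈ ptype Z C := by
        rw [hCZ.2.2]; exact le_refl _
      obtain ⟨y, hyC, hyZ⟩ := this
      have : (⟨r, hr⟩ : trimHat X) ∈ ptype Z A := ⟨y, hCA hyC, hyZ⟩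
      rw [hA.2.2] at this
      exact le_trans (Subtype.coe_le_coe.mpr this) hrp
    · intro hqp
      have : q ∈ ptype Z A := by rw [hA.2.2]; exact le_refl _
      obtain ⟨x, hxA, hxZ⟩ := this
      obtain ⟨r, C, hC, hxC, hCA⟩ := h.nhds_base x A (hA.2.1.mem_nhds hxA)
      have hxXq : x ∈ X ↑q := hZX q hxZ
      have hrq : r ≤ ↑q := (h.label_sup ↑q x hxXq).1 ⟨C, hC, hxC⟩
      have : p ∈ ptype X C := by rw [hC.2.2]; exact le_trans hrq hqp
      obtain ⟨y, hyC, hyX⟩ := this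
      exact ⟨y, hCA hyC, hyX⟩
  have hiff : ∀ (A : Set W) (q : trimHat X), IsTrimSet Z q A ↔ IsTrimSet X ↑q A :=
    fun A q => ⟨hZXt A q, hXZ A q⟩
  -- every point of Z q has a Z-q-trim set containing it
  have hclean : ∀ q : trimHat X, ∀ x ∈ Z q, ∃ A, IsTrimSet Z q A ∧ x ∈ A := by
    intro q x hx
    rw [hZ q] at hx
    obtain ⟨_, A, hA, hxA⟩ := hx
    exact ⟨A, hXZ A q hA, hxA⟩
  refine ⟨?_, hclean, hZX, ?_, hiff⟩
  · constructor
    · constructor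
      · -- nonempty
        intro q
        obtain ⟨A, hA⟩ := q.2
        have : (q : P) ∈ ptype X A := by rw [hA.2.2]; exact le_refl _
        obtain ⟨B, hBA, hB⟩ := h.trim_dense A hA.2.1 ↑q ⟨this, q.2⟩
        have : (q : P) ∈ ptype X B := by rw [hB.2.2]; exact le_refl _
        obtain ⟨x, hxB, hxX⟩ := this
        exact ⟨x, by rw [hZ q]; exact ⟨hxX, B, hB, hxB⟩⟩
      · -- pairwise disjoint
        intro p q hpq
        have : (p : P) ≠ (q : P) := fun e => hpq (Subtype.ext e)
        exact (h.pairwise_disjoint this).mono (hZX p) (hZX q)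
    · -- nhds_base
      intro w U hU
      obtain ⟨p, A, hA, hwA, hAU⟩ := h.nhds_base w U hU
      exact ⟨⟨p, A, hA⟩, A, hXZ A ⟨p, A, hA⟩ hA, hwA, hAU⟩
    · -- trim_dense
      intro A hAopen q hq
      obtain ⟨x, hxA, hxZ⟩ := hq.1
      have hpA : (q : P) ∈ ptype X A := ⟨x, hxA, hZX q hxZ⟩
      obtain ⟨B, hBA, hB⟩ := h.trim_dense A hAopen ↑q ⟨hpA, q.2⟩
      exact ⟨B, hBA, hXZ B q hB⟩
    · -- label_sup
      intro q x hx
      obtain ⟨A, hA, hxA⟩ := hclean q x hx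
      have hxX : x ∈ X ↑q := hZX q hx
      constructor
      · intro r hr
        obtain ⟨C, hC, hxC⟩ := hr
        exact Subtype.coe_le_coe.mp
          ((h.label_sup ↑q x hxX).1 ⟨C, hZXt C r hC, hxC⟩)
      · intro y hy
        exact hy ⟨A, hA, hxA⟩
    · -- full
      intro q w hw
      obtain ⟨A, hA, hwA, _⟩ := hw univ Filter.univ_mem
      have hwX : w ∈ X ↑q := by
        apply h.full ↑q w
        intro U hU
        obtain ⟨B, hB, hwB, hBU⟩ := hw U hU
        exact ⟨B, hZXt B q hB, hwB, hBU⟩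
      rw [hZ q]
      exact ⟨hwX, A, hZXt A q hA, hwA⟩
  · -- regular extension
    intro A q p hA hAp
    have := hZXt A q hA
    have : p ∈ ptype X A := hAp
    rw [(hZXt A q hA).2.2] at this
    exact this
end

section
/- Let P be a countable poset. Then there exists a compact Stone space admitting a trim P-partition if and only if P has a finite foundation. -/
open Set

variable {P W : Type*} [PartialOrder P] [TopologicalSpace W]

set_option linter.unusedSectionVars false

open Set OnePoint

namespace TrimConstr

variable {P : Type*} [PartialOrder P]

/-- Code of a list over `P × ℕ` via an injection `e : P → ℕ`. -/
def cod (e : P → ℕ) (l : List (P × ℕ)) : ℕ :=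
  Encodable.encode (l.map fun a => (e a.1, a.2))

lemma cod_inj {e : P → ℕ} (he : Function.Injective e) : Function.Injective (cod e) := by
  intro l l' h
  have hmap : Function.Injective (fun a : P × ℕ => (e a.1, a.2)) := by
    intro ⟨a1, a2⟩ ⟨b1, b2⟩ hab
    simp only [Prod.mk.injEq] at hab
    exact Prod.ext (he hab.1) hab.2
  exact List.map_injective_iff.mpr hmap (Encodable.encode_injective h)

/-- Good lists: nondecreasing first components, head of the form `(f, 0)` with `f ∈ F`. -/
def GoodL (F : Finset P) (l : List (P × ℕ)) : Prop :=
  l.Chain' (fun a b => a.1 ≤ b.1) ∧ ∃ f ∈ F, l.head? = Option.some (f, 0)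

lemma GoodL.ne_nil {F : Finset P} {l : List (P × ℕ)} (h : GoodL F l) : l ≠ [] := by
  obtain ⟨-, f, -, hf⟩ := h
  intro h0; rw [h0] at hf; simp at hf

/-- The defining condition of the space. -/
def Cond (e : P → ℕ) (F : Finset P) (x : ℕ → OnePoint ℕ) : Prop :=
  (∃ f ∈ F, x 0 = (cod e [(f, 0)] : ℕ)) ∧
  (∀ n (m : ℕ), x n = (m : OnePoint ℕ) → ∃ l, GoodL F l ∧ l.length = n + 1 ∧ m = cod e l) ∧
  (∀ n (m : ℕ), x (n + 1) = (m : OnePoint ℕ) →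
    ∃ l a, m = cod e (l ++ [a]) ∧ x n = (cod e l : OnePoint ℕ))

/-- The carrier space. -/
abbrev Wc (e : P → ℕ) (F : Finset P) : Type := {x : ℕ → OnePoint ℕ // Cond e F x}

/-- Label of a list. -/
def labL (p₀ : P) (l : List (P × ℕ)) : P := (l.getLastD (p₀, 0)).1

lemma labL_append (p₀ : P) (l : List (P × ℕ)) (a : P × ℕ) : labL p₀ (l ++ [a]) = a.1 := by
  simp [labL, List.getLastD_eq_getLast?, List.getLast?_concat]

end TrimConstr
section C2
namespace TrimConstr
variable {P : Type*} [PartialOrder P] {e : P → ℕ} {F : Finset P} {p₀ : P}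

-- W1
lemma cond_good {x : ℕ → OnePoint ℕ} (hx : Cond e F x) (he : Function.Injective e)
    {n : ℕ} {l : List (P × ℕ)} (h : x n = (cod e l : OnePoint ℕ)) :
    GoodL F l ∧ l.length = n + 1 := by
  obtain ⟨l', hg, hlen, hcl⟩ := hx.2.1 n (cod e l) h
  obtain rfl : l = l' := cod_inj he hcl
  exact ⟨hg, hlen⟩

-- W2
lemma cond_step {x : ℕ → OnePoint ℕ} (hx : Cond e F x) (he : Function.Injective e)
    {n : ℕ} {l' : List (P × ℕ)} (h : x (n + 1) = (cod e l' : OnePoint ℕ)) :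
    ∃ l a, l' = l ++ [a] ∧ x n = (cod e l : OnePoint ℕ) := by
  obtain ⟨l, a, hm, hxn⟩ := hx.2.2 n (cod e l') h
  exact ⟨l, a, cod_inj he hm, hxn⟩

-- W3 : prefixes
lemma cond_prefix {x : ℕ → OnePoint ℕ} (hx : Cond e F x) (he : Function.Injective e) :
    ∀ {j : ℕ} {l' : List (P × ℕ)}, x j = (cod e l' : OnePoint ℕ) →
      ∀ i ≤ j, x i = (cod e (l'.take (i + 1)) : OnePoint ℕ) := by
  intro j
  induction j with
  | zero =>
    intro l' h i hi
    obtain rfl : i = 0 := Nat.le_zero.mp hi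
    have hlen := (cond_good hx he h).2
    rw [List.take_of_length_le (by omega)]
    exact h
  | succ n ih =>
    intro l' h i hi
    rcases Nat.lt_or_ge i (n + 1) with hlt | hge
    · obtain ⟨l, a, rfl, hxn⟩ := cond_step hx he h
      have hlen := (cond_good hx he hxn).2
      have := ih hxn i (by omega)
      rwa [List.take_append_of_le_length (by omega)]
    · obtain rfl : i = n + 1 := by omega
      have hlen := (cond_good hx he h).2
      rw [List.take_of_length_le (by omega)]
      exact h

-- monotone labels along a point
lemma cond_mono {x : ℕ → OnePoint ℕ} (hx : Cond e F x) (he : Function.Injective e)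
    {i j : ℕ} (hij : i ≤ j) {l l' : List (P × ℕ)}
    (hi : x i = (cod e l : OnePoint ℕ)) (hj : x j = (cod e l' : OnePoint ℕ)) :
    labL p₀ l ≤ labL p₀ l' := by
  induction j, hij using Nat.le_induction generalizing l' with
  | base =>
    obtain rfl : l = l' := cod_inj he (by
      have := hi.symm.trans hj
      exact_mod_cast this)
    exact le_refl _
  | succ n hn ih =>
    obtain ⟨l₀, a, rfl, hxn⟩ := cond_step hx he hj
    have h1 : labL p₀ l ≤ labL p₀ l₀ := ih hxn
    have hg : GoodL F (l₀ ++ [a]) := (cond_good hx he hj).1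
    have hne : l₀ ≠ [] := by
      have := (cond_good hx he hxn).2
      intro h0; rw [h0] at this; simp at this
    have hch := hg.1
    unfold List.Chain' at hch; rw [List.isChain_append] at hch
    have hlast : ∀ b ∈ l₀.getLast?, b.1 ≤ a.1 := fun b hb => hch.2.2 b hb a rfl
    have : labL p₀ l₀ ≤ a.1 := by
      rw [labL, List.getLastD_eq_getLast?, List.getLast?_eq_getLast hne]
      simpa using hlast _ (List.getLast?_eq_getLast hne)
    rw [labL_append]
    exact h1.trans this

/-- The canonical (finite-path) point of a good list. -/
def ptc (e : P → ℕ) (l : List (P × ℕ)) : ℕ → OnePoint ℕ :=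
  fun n => if n + 1 ≤ l.length then (cod e (l.take (n + 1)) : OnePoint ℕ) else ∞

lemma goodL_take {F : Finset P} {l : List (P × ℕ)} (hg : GoodL F l) {k : ℕ} (hk : 1 ≤ k) :
    GoodL F (l.take k) := by
  refine ⟨hg.1.take _, ?_⟩
  obtain ⟨f, hf, hh⟩ := hg.2
  refine ⟨f, hf, ?_⟩
  cases l with
  | nil => simp at hh
  | cons b t =>
    cases k with
    | zero => omega
    | succ k => simpa using hh

lemma ptc_cond {l : List (P × ℕ)} (hg : GoodL F l) : Cond e F (ptc e l) := by
  have hne : l ≠ [] := hg.ne_nil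
  refine ⟨?_, ?_, ?_⟩
  · obtain ⟨f, hf, hh⟩ := hg.2
    refine ⟨f, hf, ?_⟩
    have h1 : 0 + 1 ≤ l.length := by
      cases l with
      | nil => exact absurd rfl hne
      | cons b t => simp
    rw [ptc, if_pos h1]
    congr 1
    cases l with
    | nil => exact absurd rfl hne
    | cons b t => simp_all
  · intro n m hm
    rw [ptc] at hm
    split_ifs at hm with h
    · refine ⟨l.take (n+1), goodL_take hg (by omega), ?_, ?_⟩
      · rw [List.length_take]; omega
      · exact_mod_cast hm.symm
    · exact absurd hm.symm (OnePoint.coe_ne_infty m)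
  · intro n m hm
    rw [ptc] at hm
    split_ifs at hm with h
    · have hm' : m = cod e (l.take (n + 2)) := by exact_mod_cast hm.symm
      refine ⟨l.take (n + 1), l.get ⟨n + 1, by omega⟩, ?_, ?_⟩
      · rw [hm', List.take_succ]
        congr 1
        simp [List.getElem?_eq_getElem (show n + 1 < l.length by omega)]
      · rw [ptc, if_pos (by omega)]
    · exact absurd hm.symm (OnePoint.coe_ne_infty m)

end TrimConstr
end C2
section C3
namespace TrimConstr
variable {P : Type*} [PartialOrder P] {e : P → ℕ} {F : Finset P} {p₀ : P}

/-- The partition. -/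
def Xp (e : P → ℕ) (F : Finset P) (p₀ : P) (p : P) : Set (Wc e F) :=
  {x | (∃ n l, x.1 n = (cod e l : OnePoint ℕ) ∧ labL p₀ l = p) ∧
    ∀ n l, x.1 n = (cod e l : OnePoint ℕ) → labL p₀ l ≤ p}

lemma ptc_at_last {l : List (P × ℕ)} (hne : l ≠ []) :
    ptc e l (l.length - 1) = (cod e l : OnePoint ℕ) := by
  have hpos : 0 < l.length := List.length_pos_iff.mpr hne
  simp only [ptc]
  rw [if_pos (by omega), show l.length - 1 + 1 = l.length by omega, List.take_length]

lemma ptc_at_length (l : List (P × ℕ)) : ptc e l l.length = ∞ := by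
  rw [ptc, if_neg (by omega)]

lemma ptc_mem_Xp (he : Function.Injective e) {l : List (P × ℕ)} (hg : GoodL F l) :
    (⟨ptc e l, ptc_cond hg⟩ : Wc e F) ∈ Xp e F p₀ (labL p₀ l) := by
  have hne := hg.ne_nil
  have hpos : 0 < l.length := List.length_pos_iff.mpr hne
  constructor
  · exact ⟨l.length - 1, l, ptc_at_last hne, rfl⟩
  · intro n l₁ h
    have hn1 : n + 1 ≤ l.length := by
      by_contra hc
      simp only [ptc] at h
      rw [if_neg hc] at h
      exact (OnePoint.coe_ne_infty _) h.symm
    exact cond_mono (ptc_cond hg) he (by omega) h (ptc_at_last hne)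

lemma Xp_disjoint (p q : P) (hpq : p ≠ q) : Disjoint (Xp e F p₀ p) (Xp e F p₀ q) := by
  rw [Set.disjoint_left]
  rintro x ⟨⟨n, l, hnl, hl⟩, hbp⟩ ⟨hq1, hbq⟩
  obtain ⟨n', l', hnl', hl'⟩ := hq1
  exact hpq (le_antisymm (hl ▸ hbq n l hnl) (hl' ▸ hbp n' l' hnl'))

/-- Trim sets. -/
def Tset (e : P → ℕ) (F : Finset P) (l : List (P × ℕ)) (K : Finset ℕ) : Set (Wc e F) :=
  {x | x.1 (l.length - 1) = (cod e l : OnePoint ℕ) ∧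
    ∀ m ∈ K, x.1 l.length ≠ (m : OnePoint ℕ)}

lemma ptc_mem_Tset {l : List (P × ℕ)} (hg : GoodL F l) (K : Finset ℕ) :
    (⟨ptc e l, ptc_cond hg⟩ : Wc e F) ∈ Tset e F l K :=
  ⟨ptc_at_last hg.ne_nil, fun m _ => by
    show ptc e l l.length ≠ _
    rw [ptc_at_length]; exact fun h => (OnePoint.coe_ne_infty m) h.symm⟩

-- a good extension by a fresh index avoiding K
lemma exists_fresh (he : Function.Injective e) {l : List (P × ℕ)} (hg : GoodL F l)
    {q : P} (hq : labL p₀ l ≤ q) (K : Finset ℕ) :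
    ∃ j : ℕ, GoodL F (l ++ [(q, j)]) ∧ cod e (l ++ [(q, j)]) ∉ K ∧
      labL p₀ (l ++ [(q, j)]) = q := by
  have hne := hg.ne_nil
  have hinj : Function.Injective (fun j : ℕ => cod e (l ++ [(q, j)])) := by
    intro j j' hj
    have := cod_inj he hj
    have := List.append_inj_right this rfl
    simpa using this
  have hfin : {j : ℕ | cod e (l ++ [(q, j)]) ∈ K}.Finite := by
    have : {j : ℕ | cod e (l ++ [(q, j)]) ∈ K} =
        (fun j : ℕ => cod e (l ++ [(q, j)])) ⁻¹' ↑K := rfl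
    rw [this]
    exact Set.Finite.preimage hinj.injOn K.finite_toSet
  obtain ⟨j, hj⟩ := hfin.infinite_compl.nonempty
  refine ⟨j, ⟨?_, ?_⟩, hj, labL_append p₀ l (q, j)⟩
  · unfold List.Chain'; rw [List.isChain_append]
    refine ⟨hg.1, List.isChain_singleton _, fun b hb y hy => ?_⟩
    simp only [List.head?_cons, Option.mem_def, Option.some.injEq] at hy
    subst hy
    have : l.getLast? = Option.some (l.getLast hne) := List.getLast?_eq_getLast hne
    rw [this, Option.mem_def, Option.some.injEq] at hb
    subst hb
    show (l.getLast hne).1 ≤ q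
    have : labL p₀ l = (l.getLast hne).1 := by
      rw [labL, List.getLastD_eq_getLast?, this]; rfl
    rw [← this]; exact hq
  · obtain ⟨f, hf, hh⟩ := hg.2
    exact ⟨f, hf, by rw [List.head?_append, hh]; rfl⟩
end TrimConstr
end C3
section C4
namespace TrimConstr
variable {P : Type*} [PartialOrder P] {e : P → ℕ} {F : Finset P} {p₀ : P}

lemma isOpen_coe_image (S : Set ℕ) : IsOpen ((fun m : ℕ => (m : OnePoint ℕ)) '' S) :=
  OnePoint.isOpenEmbedding_coe.isOpenMap _ (isOpen_discrete _)

lemma isOpen_coe_singleton (m : ℕ) : IsOpen ({(m : OnePoint ℕ)} : Set (OnePoint ℕ)) := by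
  have := isOpen_coe_image {m}
  simpa using this

lemma isClosed_cond : IsClosed {x : ℕ → OnePoint ℕ | Cond e F x} := by
  have hS : {x : ℕ → OnePoint ℕ | Cond e F x} =
      ({x | ∃ f ∈ F, x 0 = (cod e [(f, 0)] : OnePoint ℕ)} ∩
       (⋂ n : ℕ, {x | ∀ m : ℕ, x n = (m : OnePoint ℕ) →
          ∃ l, GoodL F l ∧ l.length = n + 1 ∧ m = cod e l}) ∩
       (⋂ n : ℕ, {x | ∀ m : ℕ, x (n + 1) = (m : OnePoint ℕ) →
          ∃ l a, m = cod e (l ++ [a]) ∧ x n = (cod e l : OnePoint ℕ)})) := by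
    ext x
    simp only [Cond, Set.mem_setOf_eq, Set.mem_inter_iff, Set.mem_iInter]
    tauto
  rw [hS]
  refine IsClosed.inter (IsClosed.inter ?_ ?_) ?_
  · have : {x : ℕ → OnePoint ℕ | ∃ f ∈ F, x 0 = (cod e [(f, 0)] : OnePoint ℕ)} =
        ⋃ f ∈ F, (fun x : ℕ → OnePoint ℕ => x 0) ⁻¹' {(cod e [(f, 0)] : OnePoint ℕ)} := by
      ext x; simp
    rw [this]
    exact Set.Finite.isClosed_biUnion F.finite_toSet
      (fun f _ => isClosed_singleton.preimage (continuous_apply 0))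
  · refine isClosed_iInter fun n => ?_
    have : {x : ℕ → OnePoint ℕ | ∀ m : ℕ, x n = (m : OnePoint ℕ) →
          ∃ l, GoodL F l ∧ l.length = n + 1 ∧ m = cod e l} =
        (fun x : ℕ → OnePoint ℕ => x n) ⁻¹'
          {v | ∀ m : ℕ, v = (m : OnePoint ℕ) → ∃ l, GoodL F l ∧ l.length = n + 1 ∧ m = cod e l} := rfl
    rw [this]
    refine IsClosed.preimage (continuous_apply n) ?_
    rw [← isOpen_compl_iff]
    have hc : {v : OnePoint ℕ | ∀ m : ℕ, v = (m : OnePoint ℕ) →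
          ∃ l, GoodL F l ∧ l.length = n + 1 ∧ m = cod e l}ᶜ =
        (fun m : ℕ => (m : OnePoint ℕ)) ''
          {m | ¬ ∃ l, GoodL F l ∧ l.length = n + 1 ∧ m = cod e l} := by
      ext v
      simp only [Set.mem_compl_iff, Set.mem_setOf_eq, Set.mem_image, not_forall]
      constructor
      · rintro ⟨m, hm, hnot⟩; exact ⟨m, hnot, hm.symm⟩
      · rintro ⟨m, hnot, rfl⟩; exact ⟨m, rfl, hnot⟩
    rw [hc]
    exact isOpen_coe_image _
  · refine isClosed_iInter fun n => ?_
    rw [← isOpen_compl_iff]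
    have hc : {x : ℕ → OnePoint ℕ | ∀ m : ℕ, x (n + 1) = (m : OnePoint ℕ) →
          ∃ l a, m = cod e (l ++ [a]) ∧ x n = (cod e l : OnePoint ℕ)}ᶜ =
        ⋃ m : ℕ, ((fun x : ℕ → OnePoint ℕ => x (n + 1)) ⁻¹' {(m : OnePoint ℕ)} ∩
          (fun x : ℕ → OnePoint ℕ => x n) ⁻¹'
            {v | ∀ l : List (P × ℕ), ∀ a, m = cod e (l ++ [a]) → v ≠ (cod e l : OnePoint ℕ)}) := by
      ext x
      simp only [Set.mem_compl_iff, Set.mem_setOf_eq, Set.mem_iUnion, Set.mem_inter_iff,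
        Set.mem_preimage, Set.mem_singleton_iff, not_forall]
      constructor
      · rintro ⟨m, hm, hnot⟩
        refine ⟨m, hm, fun l a hml hv => hnot ⟨l, a, hml, hv⟩⟩
      · rintro ⟨m, hm, hv⟩
        exact ⟨m, hm, fun ⟨l, a, hml, hxl⟩ => hv l a hml hxl⟩
    rw [hc]
    refine isOpen_iUnion fun m => IsOpen.inter
      ((isOpen_coe_singleton m).preimage (continuous_apply _)) ?_
    refine IsOpen.preimage (continuous_apply n) ?_
    rw [← isClosed_compl_iff]
    have hsub : {v : OnePoint ℕ | ∀ l : List (P × ℕ), ∀ a, m = cod e (l ++ [a]) →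
        v ≠ (cod e l : OnePoint ℕ)}ᶜ.Subsingleton := by
      rintro v hv v' hv'
      simp only [Set.mem_compl_iff, Set.mem_setOf_eq, not_forall] at hv hv'
      obtain ⟨l, a, hm, hvl⟩ := hv
      obtain ⟨l', a', hm', hvl'⟩ := hv'
      rw [not_not] at hvl hvl'
      rw [hvl, hvl']
      have henc : (l.map fun b => (e b.1, b.2)) ++ [(e a.1, a.2)] =
          (l'.map fun b => (e b.1, b.2)) ++ [(e a'.1, a'.2)] := by
        have := Encodable.encode_injective (hm.symm.trans hm' : cod e (l ++ [a]) = cod e (l' ++ [a']))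
        simpa using this
      have : (l.map fun b => (e b.1, b.2)) = (l'.map fun b => (e b.1, b.2)) :=
        List.append_inj_left henc (by
          have := congrArg List.length henc
          simpa using this)
      show _ = _
      norm_cast
      simp [cod, this]
    exact hsub.isClosed

lemma wc_compactSpace : CompactSpace (Wc e F) :=
  isCompact_iff_compactSpace.mp (isClosed_cond.isCompact)

lemma continuous_evalW (n : ℕ) : Continuous (fun x : Wc e F => x.1 n) :=
  (continuous_apply n).comp continuous_subtype_val

lemma isOpen_eqW (n m : ℕ) : IsOpen {x : Wc e F | x.1 n = (m : OnePoint ℕ)} :=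
  (isOpen_coe_singleton m).preimage (continuous_evalW n)

lemma isClosed_eqW (n m : ℕ) : IsClosed {x : Wc e F | x.1 n = (m : OnePoint ℕ)} :=
  isClosed_singleton.preimage (continuous_evalW n)

lemma Tset_eq (l : List (P × ℕ)) (K : Finset ℕ) : Tset e F l K =
    {x : Wc e F | x.1 (l.length - 1) = (cod e l : OnePoint ℕ)} ∩
      ⋂ m ∈ K, {x : Wc e F | x.1 l.length = (m : OnePoint ℕ)}ᶜ := by
  ext x
  simp only [Tset, Set.mem_setOf_eq, Set.mem_inter_iff, Set.mem_iInter, Set.mem_compl_iff]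

lemma isOpen_Tset (l : List (P × ℕ)) (K : Finset ℕ) : IsOpen (Tset e F l K) := by
  rw [Tset_eq]
  exact (isOpen_eqW _ _).inter (Set.Finite.isOpen_biInter K.finite_toSet
    (fun m _ => (isClosed_eqW _ _).isOpen_compl))

lemma isClosed_Tset (l : List (P × ℕ)) (K : Finset ℕ) : IsClosed (Tset e F l K) := by
  rw [Tset_eq]
  exact (isClosed_eqW _ _).inter (isClosed_biInter
    (fun m _ => (isOpen_eqW _ _).isClosed_compl))

lemma isCompact_Tset (l : List (P × ℕ)) (K : Finset ℕ) : IsCompact (Tset e F l K) := by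
  haveI := wc_compactSpace (e := e) (F := F)
  exact (isClosed_Tset l K).isCompact

lemma isTrimSet_Tset (he : Function.Injective e) {l : List (P × ℕ)} (hg : GoodL F l)
    (K : Finset ℕ) : IsTrimSet (Xp e F p₀) (labL p₀ l) (Tset e F l K) := by
  refine ⟨isCompact_Tset l K, isOpen_Tset l K, ?_⟩
  ext q
  simp only [ptype, Set.mem_setOf_eq, Set.mem_Ici]
  constructor
  · rintro ⟨x, hxT, hxX⟩
    exact hxX.2 (l.length - 1) l hxT.1
  · intro hq
    obtain ⟨j, hgj, hKj, hlabj⟩ := exists_fresh (p₀ := p₀) he hg hq K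
    set l' := l ++ [(q, j)] with hl'
    have hlen' : l'.length = l.length + 1 := by simp [hl']
    have hne := hg.ne_nil
    have hpos : 0 < l.length := List.length_pos_iff.mpr hne
    refine ⟨⟨ptc e l', ptc_cond hgj⟩, ⟨?_, ?_⟩, ?_⟩
    · show ptc e l' (l.length - 1) = _
      simp only [ptc]
      rw [if_pos (by omega)]
      congr 2
      rw [show l.length - 1 + 1 = l.length by omega, hl',
        List.take_append_of_le_length (le_refl _), List.take_length]
    · intro m hm
      show ptc e l' l.length ≠ _
      simp only [ptc]
      rw [if_pos (by omega)]
      have : l'.take (l.length + 1) = l' := by rw [← hlen', List.take_length]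
      rw [this]
      intro hcontr
      have : cod e l' = m := by exact_mod_cast hcontr
      exact hKj (this ▸ hm)
    · have := ptc_mem_Xp (p₀ := p₀) he hgj
      rwa [hlabj] at this
end TrimConstr
end C4
section C5
namespace TrimConstr
variable {P : Type*} [PartialOrder P] {e : P → ℕ} {F : Finset P} {p₀ : P}

lemma infty_mono {x : ℕ → OnePoint ℕ} (hx : Cond e F x) {n : ℕ} (hn : x n = ∞) :
    ∀ j, n ≤ j → x j = ∞ := by
  intro j hj
  induction j, hj using Nat.le_induction with
  | base => exact hn
  | succ j hj ih =>
    cases hxj : x (j + 1) with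
    | infty => rfl
    | coe m =>
      obtain ⟨l, a, -, hxl⟩ := hx.2.2 j m hxj
      rw [ih] at hxl
      exact absurd hxl.symm (OnePoint.coe_ne_infty _)

lemma zero_ne_infty {x : ℕ → OnePoint ℕ} (hx : Cond e F x) : x 0 ≠ ∞ := by
  obtain ⟨f, -, h0⟩ := hx.1
  rw [h0]
  exact OnePoint.coe_ne_infty _

/-- Main neighbourhood-base lemma: every neighbourhood of `w` contains a `Tset`
neighbourhood of `w` whose list lies along `w`. -/
lemma exists_Tset_subset (he : Function.Injective e) (w : Wc e F) {U : Set (Wc e F)}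
    (hU : U ∈ nhds w) :
    ∃ l K, GoodL F l ∧ w.1 (l.length - 1) = (cod e l : OnePoint ℕ) ∧
      w ∈ Tset e F l K ∧ Tset e F l K ⊆ U := by
  classical
  rw [nhds_induced] at hU
  obtain ⟨V, hV, hVU⟩ := Filter.mem_comap.mp hU
  rw [nhds_pi] at hV
  obtain ⟨I, t, ht, htV⟩ := Filter.mem_pi'.mp hV
  set N := I.sup id with hN
  have hIle : ∀ i ∈ I, i ≤ N := fun i hi => Finset.le_sup (f := id) hi
  cases hwN : w.1 N with
  | coe m =>
    obtain ⟨l, hg, hlen, rfl⟩ := w.2.2.1 N m hwN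
    refine ⟨l, ∅, hg, ?_, ⟨?_, by simp⟩, ?_⟩
    · rw [hlen]; simpa using hwN
    · rw [hlen]; simpa using hwN
    · intro y hy
      apply hVU
      apply htV
      intro i hi
      have hil : i ≤ N := hIle i hi
      have hyi : y.1 i = (cod e (l.take (i + 1)) : OnePoint ℕ) := by
        have := hy.1
        rw [hlen] at this
        simp only [Nat.add_sub_cancel] at this
        exact cond_prefix y.2 he this i hil
      have hwi : w.1 i = (cod e (l.take (i + 1)) : OnePoint ℕ) :=
        cond_prefix w.2 he hwN i hil
      rw [hyi, ← hwi]
      exact mem_of_mem_nhds (ht i)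
  | infty =>
    have hex : ∃ n, w.1 n = ∞ := ⟨N, hwN⟩
    set k := Nat.find hex with hk
    have hkinf : w.1 k = ∞ := Nat.find_spec hex
    have hkpos : 0 < k := by
      rcases Nat.eq_zero_or_pos k with h0 | h
      · exact absurd (h0 ▸ hkinf) (zero_ne_infty w.2)
      · exact h
    have hklt : ∀ j < k, w.1 j ≠ ∞ := fun j hj => Nat.find_min hex hj
    obtain ⟨m', hm'⟩ : ∃ m' : ℕ, w.1 (k - 1) = (m' : OnePoint ℕ) := by
      cases h : w.1 (k - 1) with
      | infty => exact absurd h (hklt _ (by omega))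
      | coe m => exact ⟨m, rfl⟩
    obtain ⟨l, hg, hlen, rfl⟩ := w.2.2.1 (k - 1) m' hm'
    have hlenk : l.length = k := by omega
    have hinfty_ge : ∀ j, k ≤ j → w.1 j = ∞ := infty_mono w.2 hkinf
    -- finite "bad" sets for coordinates ≥ k
    have hB : ∀ i, ∃ B : Finset ℕ, i ∈ I → k ≤ i →
        ((fun m : ℕ => (m : OnePoint ℕ)) '' (↑B)ᶜ ∪ {∞}) ⊆ t i := by
      intro i
      by_cases hi : i ∈ I ∧ k ≤ i
      · have hti : t i ∈ nhds (∞ : OnePoint ℕ) := by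
          have := ht i
          rwa [hinfty_ge i hi.2] at this
        obtain ⟨s, ⟨-, hsc⟩, hst⟩ := (OnePoint.hasBasis_nhds_infty).mem_iff.mp hti
        have hsfin : s.Finite := hsc.finite_of_discrete
        refine ⟨hsfin.toFinset, fun _ _ => ?_⟩
        refine subset_trans ?_ hst
        intro v hv
        rcases hv with ⟨b, hb, rfl⟩ | hv
        · left; exact ⟨b, by simpa using hb, rfl⟩
        · right; exact hv
      · exact ⟨∅, fun h1 h2 => absurd ⟨h1, h2⟩ hi⟩
    choose B hBs using hB
    -- prefix-code function
    have gdef : ∀ b : ℕ, ∃ g : ℕ, ∀ l'' : List (P × ℕ), b = cod e l'' →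
        g = cod e (l''.take (k + 1)) := by
      intro b
      by_cases hb : ∃ l'' : List (P × ℕ), b = cod e l''
      · obtain ⟨l'', rfl⟩ := hb
        refine ⟨cod e (l''.take (k + 1)), fun l₂ h2 => ?_⟩
        obtain rfl := cod_inj he h2
        rfl
      · exact ⟨0, fun l₂ h2 => absurd ⟨l₂, h2⟩ hb⟩
    choose g hgs using gdef
    set K : Finset ℕ := I.biUnion (fun i => (B i).image g) with hK
    refine ⟨l, K, hg, by rw [hlenk]; exact hm', ⟨by rw [hlenk]; exact hm', ?_⟩, ?_⟩
    · intro m hm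
      rw [hlenk, hkinf]
      exact fun h => (OnePoint.coe_ne_infty m) h.symm
    · intro y hy
      apply hVU
      apply htV
      intro i hi
      rcases Nat.lt_or_ge i k with hik | hik
      · -- small coordinates: y agrees with w
        have hyl : y.1 (l.length - 1) = (cod e l : OnePoint ℕ) := hy.1
        rw [hlenk] at hyl
        have hyi : y.1 i = (cod e (l.take (i + 1)) : OnePoint ℕ) :=
          cond_prefix y.2 he hyl i (by omega)
        have hwi : w.1 i = (cod e (l.take (i + 1)) : OnePoint ℕ) :=
          cond_prefix w.2 he hm' i (by omega)
        rw [hyi, ← hwi]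
        exact mem_of_mem_nhds (ht i)
      · -- large coordinates
        have hsub := hBs i hi hik
        cases hyi : y.1 i with
        | infty =>
          exact hsub (Or.inr rfl)
        | coe m =>
          obtain ⟨l'', hg'', hlen'', rfl⟩ := y.2.2.1 i m hyi
          by_cases hmB : cod e l'' ∈ B i
          · exfalso
            have hyk : y.1 k = (cod e (l''.take (k + 1)) : OnePoint ℕ) :=
              cond_prefix y.2 he hyi k hik
            have hgm : g (cod e l'') = cod e (l''.take (k + 1)) := hgs _ _ rfl
            have hmK : g (cod e l'') ∈ K := by
              rw [hK]
              exact Finset.mem_biUnion.mpr ⟨i, hi, Finset.mem_image_of_mem g hmB⟩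
            have := hy.2 _ hmK
            rw [hlenk] at this
            exact this (by rw [hyk, hgm])
          · exact hsub (Or.inl ⟨cod e l'', hmB, rfl⟩)

end TrimConstr
end C5
section C6
namespace TrimConstr
variable {P : Type*} [PartialOrder P] {e : P → ℕ} {F : Finset P} {p₀ : P}

lemma Xp_nonempty (he : Function.Injective e) (hF : ∀ r : P, ∃ f ∈ F, f ≤ r) (p : P) :
    (Xp e F p₀ p).Nonempty := by
  obtain ⟨f, hf, hfp⟩ := hF p
  have hg : GoodL F [(f, 0), (p, 0)] :=
    ⟨List.isChain_cons_cons.mpr ⟨hfp, List.isChain_singleton _⟩, f, hf, rfl⟩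
  have hlab : labL p₀ [(f, 0), (p, 0)] = p := by simp [labL]
  refine ⟨⟨ptc e _, ptc_cond hg⟩, ?_⟩
  have h := ptc_mem_Xp (p₀ := p₀) he hg
  rwa [hlab] at h

lemma full_Xp (he : Function.Injective e) (p : P) (w : Wc e F)
    (H : ∀ U ∈ nhds w, ∃ A, IsTrimSet (Xp e F p₀) p A ∧ w ∈ A ∧ A ⊆ U) :
    w ∈ Xp e F p₀ p := by
  have bound : ∀ n l, w.1 n = (cod e l : OnePoint ℕ) → labL p₀ l ≤ p := by
    intro n l h
    obtain ⟨hg, hlen⟩ := cond_good w.2 he h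
    have hmemT : w ∈ Tset e F l ∅ := by
      refine ⟨?_, by simp⟩
      rw [hlen]; simpa using h
    have hnhds : Tset e F l ∅ ∈ nhds w := (isOpen_Tset l ∅).mem_nhds hmemT
    obtain ⟨A, hA, hwA, hAT⟩ := H _ hnhds
    have hp : p ∈ ptype (Xp e F p₀) A := hA.2.2 ▸ Set.self_mem_Ici
    obtain ⟨z, hzA, hzX⟩ := hp
    exact hzX.2 _ _ (hAT hzA).1
  refine ⟨?_, bound⟩
  obtain ⟨A, hA, hwA, -⟩ := H Set.univ Filter.univ_mem
  have hAn : A ∈ nhds w := hA.2.1.mem_nhds hwA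
  obtain ⟨l, K, hg, hwl, hmem, hsub⟩ := exists_Tset_subset he w hAn
  have hy : (⟨ptc e l, ptc_cond hg⟩ : Wc e F) ∈ A := hsub (ptc_mem_Tset hg K)
  have hyX := ptc_mem_Xp (p₀ := p₀) he hg
  have hlab : labL p₀ l ∈ ptype (Xp e F p₀) A := ⟨_, hy, hyX⟩
  rw [hA.2.2] at hlab
  exact ⟨l.length - 1, l, hwl, le_antisymm (bound _ _ hwl) hlab⟩

end TrimConstr
end C6

open TrimConstr in
theorem compact_trimPartition_iff_finiteFoundation' {P : Type*} [PartialOrder P] [Countable P] :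
    (∃ (W : Type) (_ : TopologicalSpace W),
        (LocallyCompactSpace W ∧ TotallyDisconnectedSpace W ∧ T2Space W ∧
          CompactSpace W) ∧
        ∃ X : P → Set W, IsPPartition X ∧
          (∀ w : W, ∀ U ∈ nhds w, ∃ p A, IsTrimSet X p A ∧ w ∈ A ∧ A ⊆ U) ∧
          (∀ p, ∀ x ∈ X p, ∃ A, IsTrimSet X p A ∧ x ∈ A) ∧
          (∀ p : P, ∀ w : W,
            (∀ U ∈ nhds w, ∃ A, IsTrimSet X p A ∧ w ∈ A ∧ A ⊆ U) → w ∈ X p)) ↔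
    ∃ F : Finset P, ∀ r : P, ∃ p ∈ F, p ≤ r := by
  constructor
  · rintro ⟨W, τ, ⟨-, -, -, hcomp⟩, X, hpart, hbase, -, -⟩
    classical
    have hcov : ∀ w : W, ∃ p A, IsTrimSet X p A ∧ w ∈ A ∧ A ⊆ Set.univ :=
      fun w => hbase w Set.univ Filter.univ_mem
    choose pf Af hAf hwAf _ using hcov
    have hsub : Set.univ ⊆ ⋃ w : W, Af w :=
      fun w _ => Set.mem_iUnion.mpr ⟨w, hwAf w⟩
    obtain ⟨t, ht⟩ := isCompact_univ.elim_finite_subcover Af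
      (fun w => (hAf w).2.1) hsub
    refine ⟨t.image pf, fun r => ?_⟩
    obtain ⟨x, hx⟩ := hpart.nonempty r
    obtain ⟨w, hwt, hxw⟩ : ∃ w ∈ t, x ∈ Af w := by
      have := ht (Set.mem_univ x)
      simpa using this
    have hr : r ∈ ptype X (Af w) := ⟨x, hxw, hx⟩
    rw [(hAf w).2.2] at hr
    exact ⟨pf w, Finset.mem_image_of_mem pf hwt, hr⟩
  · rintro ⟨F, hF⟩
    rcases isEmpty_or_nonempty P with hP | hP
    · -- degenerate case: `P` empty, use the (empty) space over the empty foundation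
      refine ⟨Wc (fun _ : P => 0) (∅ : Finset P), inferInstance, ?_, fun _ => ∅, ?_, ?_, ?_, ?_⟩
      · haveI := wc_compactSpace (e := fun _ : P => 0) (F := (∅ : Finset P))
        exact ⟨inferInstance, inferInstance, inferInstance, inferInstance⟩
      · exact ⟨fun p => hP.elim p, fun p q _ => by simp⟩
      · intro w
        exfalso
        obtain ⟨f, hf, -⟩ := w.2.1
        simp at hf
      · exact fun p => hP.elim p
      · exact fun p => hP.elim p
    · obtain ⟨e, he⟩ := exists_injective_nat P
      obtain ⟨p₀⟩ := hP
      haveI := wc_compactSpace (e := e) (F := F)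
      refine ⟨Wc e F, inferInstance,
        ⟨inferInstance, inferInstance, inferInstance, inferInstance⟩,
        Xp e F p₀, ⟨Xp_nonempty he hF, fun p q hpq => Xp_disjoint p q hpq⟩, ?_, ?_, ?_⟩
      · intro w U hU
        obtain ⟨l, K, hg, -, hmem, hsub⟩ := exists_Tset_subset he w hU
        exact ⟨labL p₀ l, Tset e F l K, isTrimSet_Tset he hg K, hmem, hsub⟩
      · rintro p x ⟨⟨n, l, hnl, hlab⟩, -⟩
        obtain ⟨hg, hlen⟩ := cond_good x.2 he hnl
        refine ⟨Tset e F l ∅, hlab ▸ isTrimSet_Tset he hg ∅, ?_, by simp⟩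
        rw [hlen]; simpa using hnl
      · exact fun p w H => full_Xp he p w H

/-- For a countable poset `P`, there is a compact Stone space admitting a
trim `P`-partition iff `P` has a finite foundation (a finite set of elements below every
element of `P`). -/
theorem compact_trimPartition_iff_finiteFoundation [Countable P] :
    (∃ (W : Type) (_ : TopologicalSpace W),
        (LocallyCompactSpace W ∧ TotallyDisconnectedSpace W ∧ T2Space W ∧
          CompactSpace W) ∧
        ∃ X : P → Set W, IsPPartition X ∧
          (∀ w : W, ∀ U ∈ nhds w, ∃ p A, IsTrimSet X p A ∧ w ∈ A ∧ A ⊆ U) ∧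
          (∀ p, ∀ x ∈ X p, ∃ A, IsTrimSet X p A ∧ x ∈ A) ∧
          (∀ p : P, ∀ w : W,
            (∀ U ∈ nhds w, ∃ A, IsTrimSet X p A ∧ w ∈ A ∧ A ⊆ U) → w ∈ X p)) ↔
    ∃ F : Finset P, ∀ r : P, ∃ p ∈ F, p ≤ r := by
  exact compact_trimPartition_iff_finiteFoundation'
end
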